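/- arXiv:2502.08935 — 7 statements merged into one kernel-verified Lean document; each statement's English description precedes it below -/
import Mathlib

section
/- Let A₁ and A₂ be n×n real Hurwitz matrices (every eigenvalue of each, regarded as a complex matrix, has negative real part). Then for every n×n real matrix G, the Sylvester equation A₁ᵀ X + X A₂ + G = 0 admits a unique n×n real solution X. -/
open Matrix Polynomial

variable {n : ℕ}

lemma eval_charpoly' (M : Matrix (Fin n) (Fin n) ℂ) (z : ℂ) :
    M.charpoly.eval z = (algebraMap ℂ (Matrix (Fin n) (Fin n) ℂ) z - M).det := by
  rw [Matrix.charpoly, ← Polynomial.coe_evalRingHom, RingHom.map_det]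
  congr 1
  ext i j
  by_cases h : i = j <;>
    simp [h, charmatrix_apply, Matrix.algebraMap_eq_diagonal, Matrix.diagonal_apply, Matrix.sub_apply]

lemma mem_spectrum_of_root (M : Matrix (Fin n) (Fin n) ℂ) (z : ℂ)
    (h : M.charpoly.eval z = 0) : z ∈ spectrum ℂ M := by
  rw [spectrum.mem_iff]
  rw [Matrix.isUnit_iff_isUnit_det, isUnit_iff_ne_zero]
  rw [eval_charpoly'] at h
  simp [h]

lemma sylvester_inj (B C : Matrix (Fin n) (Fin n) ℂ)
    (hB : ∀ z ∈ spectrum ℂ B, z.re < 0) (hC : ∀ z ∈ spectrum ℂ C, z.re < 0)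
    (X : Matrix (Fin n) (Fin n) ℂ) (h : B * X + X * C = 0) : X = 0 := by
  have h' : B * X = X * (-C) := by
    have := eq_neg_of_add_eq_zero_left h
    rw [this]; rw [mul_neg]
  have hpow : ∀ k : ℕ, B ^ k * X = X * (-C) ^ k := by
    intro k
    induction k with
    | zero => simp
    | succ k ih =>
      rw [pow_succ, pow_succ, mul_assoc, h', ← mul_assoc, ih, mul_assoc]
  have haeval : ∀ p : ℂ[X], aeval B p * X = X * aeval (-C) p := by
    intro p
    induction p using Polynomial.induction_on' with
    | add p q hp hq => simp [map_add, add_mul, mul_add, hp, hq]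
    | monomial k a =>
      rw [aeval_monomial, aeval_monomial, mul_assoc, hpow k, ← mul_assoc, Algebra.commutes, mul_assoc]
  have hzero : X * aeval (-C) B.charpoly = 0 := by
    rw [← haeval, Matrix.aeval_self_charpoly, zero_mul]
  -- factor the charpoly
  set p := B.charpoly with hp
  have hmonic : p.Monic := Matrix.charpoly_monic B
  have hsplit : p = (p.roots.map fun a => Polynomial.X - Polynomial.C a).prod :=
    (IsAlgClosed.splits p).eq_prod_roots_of_monic hmonic
  have hlist : p = ((p.roots.toList.map fun a => Polynomial.X - Polynomial.C a)).prod := by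
    conv_lhs => rw [hsplit]
    rw [← Multiset.coe_toList p.roots, Multiset.map_coe, Multiset.prod_coe, Multiset.coe_toList]
  have hunit : IsUnit (aeval (-C) p) := by
    rw [hlist, map_list_prod]
    apply List.prod_isUnit
    intro m hm
    simp only [List.mem_map] at hm
    obtain ⟨q, hq, rfl⟩ := hm
    obtain ⟨a, ha, rfl⟩ := hq
    have haroot : a ∈ p.roots := (Multiset.mem_toList).mp ha
    have : p.eval a = 0 := (Polynomial.mem_roots hmonic.ne_zero).mp haroot
    have haB : a ∈ spectrum ℂ B := mem_spectrum_of_root B a this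
    have hare : a.re < 0 := hB a haB
    have : aeval (-C) (Polynomial.X - Polynomial.C a) =
        algebraMap ℂ (Matrix (Fin n) (Fin n) ℂ) (-a) - C := by
      rw [map_sub, aeval_X, aeval_C, map_neg]; abel
    rw [this]
    by_contra hnu
    have : (-a) ∈ spectrum ℂ C := spectrum.mem_iff.mpr hnu
    have := hC _ this
    simp only [Complex.neg_re] at this
    linarith
  exact hunit.mul_right_cancel (by rw [hzero, zero_mul])

lemma spectrum_transpose_subset (M : Matrix (Fin n) (Fin n) ℂ) :
    spectrum ℂ Mᵀ ⊆ spectrum ℂ M := by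
  intro z hz
  rw [spectrum.mem_iff] at hz ⊢
  rw [Matrix.isUnit_iff_isUnit_det] at hz ⊢
  intro hu
  apply hz
  have : algebraMap ℂ (Matrix (Fin n) (Fin n) ℂ) z - Mᵀ
      = (algebraMap ℂ (Matrix (Fin n) (Fin n) ℂ) z - M)ᵀ := by
    rw [Matrix.transpose_sub]
    congr 1
    simp [Matrix.algebraMap_eq_diagonal]
  rw [this, Matrix.det_transpose]
  exact hu


/-- A real square matrix is Hurwitz if every eigenvalue of it, regarded as a complex
matrix, has negative real part. -/
def IsHurwitz {k : ℕ} (M : Matrix (Fin k) (Fin k) ℝ) : Prop :=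
  ∀ z ∈ spectrum ℂ (M.map (algebraMap ℝ ℂ)), z.re < 0

/-- if `A₁`, `A₂` are Hurwitz then for every `G` the Sylvester equation
`A₁ᵀ X + X A₂ + G = 0` has a unique solution `X`. -/
theorem sylvester_unique_solution {n : ℕ} (hn : 0 < n)
    (A₁ A₂ : Matrix (Fin n) (Fin n) ℝ)
    (h₁ : IsHurwitz A₁) (h₂ : IsHurwitz A₂) (G : Matrix (Fin n) (Fin n) ℝ) :
    ∃! X : Matrix (Fin n) (Fin n) ℝ, A₁ᵀ * X + X * A₂ + G = 0 := by

  set L : Matrix (Fin n) (Fin n) ℝ →ₗ[ℝ] Matrix (Fin n) (Fin n) ℝ :=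
    LinearMap.mulLeft ℝ A₁ᵀ + LinearMap.mulRight ℝ A₂ with hLdef
  have hL : ∀ X, L X = A₁ᵀ * X + X * A₂ := fun X => rfl
  have hinj : Function.Injective L := by
    rw [← LinearMap.ker_eq_bot, LinearMap.ker_eq_bot']
    intro X hX
    have hX0 : A₁ᵀ * X + X * A₂ = 0 := by rw [← hL]; exact hX
    have hmap : (A₁.map (algebraMap ℝ ℂ))ᵀ * (X.map (algebraMap ℝ ℂ))
        + (X.map (algebraMap ℝ ℂ)) * (A₂.map (algebraMap ℝ ℂ)) = 0 := by
      have h0 := congrArg ((algebraMap ℝ ℂ).mapMatrix) hX0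
      simp only [map_add, map_zero, RingHom.mapMatrix_apply, Matrix.map_mul,
        Matrix.transpose_map] at h0
      exact h0
    have hXc : X.map (algebraMap ℝ ℂ) = 0 :=
      sylvester_inj _ _ (fun z hz => h₁ z (spectrum_transpose_subset _ hz)) h₂ _ hmap
    ext i j
    have := congrFun (congrFun hXc i) j
    simpa using this
  obtain ⟨X, hX⟩ := LinearMap.injective_iff_surjective.mp hinj (-G)
  refine ⟨X, ?_, ?_⟩
  · show A₁ᵀ * X + X * A₂ + G = 0
    rw [← hL, hX]; simp
  · intro Y hY
    apply hinj
    rw [hL, eq_neg_of_add_eq_zero_left hY, hX]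
end

section
/- Suppose P and Π are symmetric n×n real matrices such that R + DᵀPD is invertible, and set Θ* = −(R + DᵀPD)⁻¹(BᵀP + DᵀPC + S) and Θ̄* = −(R + DᵀPD)⁻¹(BᵀΠ + DᵀP(C+C̄) + S). Assume that A + BΘ* and A + Ā + BΘ̄* are Hurwitz. Then there exist a unique n×n real matrix P₁, unique vectors p, p₁ ∈ ℝⁿ, and a unique real number c₀ satisfying: (i) (A + BΘ*)ᵀP₁ + P₁(A + Ā + BΘ̄*) + CᵀP(C + C̄) + Q − PBΘ̄* + (Θ*)ᵀ(DᵀPC + DᵀPC̄ + S) = 0; (ii) (A + Ā + BΘ̄*)ᵀp + (C + C̄ + DΘ̄*)ᵀPσ + (Θ̄*)ᵀr + Πb + q = 0; (iii) with θ* := −(R + DᵀPD)⁻¹(Bᵀp + DᵀPσ + r), (A + BΘ*)ᵀp₁ + Pb + CᵀPσ + q + (P₁ − P)(Bθ* + b) + (Θ̄*)ᵀ(DᵀPσ + r) = 0; (iv) c₀ = 2pᵀb + σᵀPσ − (Bᵀp + DᵀPσ + r)ᵀ(R + DᵀPD)⁻¹(Bᵀp + DᵀPσ + r). -/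
open Matrix Polynomial

variable {k : ℕ}

lemma mem_spec_iff_eval (M : Matrix (Fin k) (Fin k) ℂ) (μ : ℂ) :
    μ ∈ spectrum ℂ M ↔ M.charpoly.eval μ = 0 := by
  rw [spectrum.mem_iff, Matrix.charpoly, _root_.eval_det, Matrix.matPolyEquiv_charmatrix]
  rw [eval_sub, eval_X, eval_C]
  have hs : (algebraMap ℂ (Matrix (Fin k) (Fin k) ℂ)) μ = Matrix.scalar (Fin k) μ := by
    rw [Matrix.algebraMap_eq_diagonal, Matrix.scalar_apply]
    rfl
  rw [hs, Matrix.isUnit_iff_isUnit_det, isUnit_iff_ne_zero, not_not]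

lemma spec_transpose (M : Matrix (Fin k) (Fin k) ℂ) : spectrum ℂ Mᵀ = spectrum ℂ M := by
  ext μ
  rw [spectrum.mem_iff, spectrum.mem_iff, Matrix.isUnit_iff_isUnit_det,
    Matrix.isUnit_iff_isUnit_det]
  have : (algebraMap ℂ (Matrix (Fin k) (Fin k) ℂ)) μ - Mᵀ
      = ((algebraMap ℂ (Matrix (Fin k) (Fin k) ℂ)) μ - M)ᵀ := by
    rw [Matrix.transpose_sub, Matrix.algebraMap_eq_diagonal, Matrix.diagonal_transpose]
  rw [this, Matrix.det_transpose]

lemma hurwitz_isUnit {N : Matrix (Fin k) (Fin k) ℝ} (hN : IsHurwitz N) : IsUnit N := by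
  have h0 : (0 : ℂ) ∉ spectrum ℂ (N.map (algebraMap ℝ ℂ)) := by
    intro h
    simpa using hN 0 h
  rw [spectrum.zero_mem_iff, not_not] at h0
  rw [Matrix.isUnit_iff_isUnit_det, isUnit_iff_ne_zero]
  intro hdet
  rw [Matrix.isUnit_iff_isUnit_det, isUnit_iff_ne_zero] at h0
  apply h0
  have : ((algebraMap ℝ ℂ).mapMatrix N).det = algebraMap ℝ ℂ N.det :=
    (RingHom.map_det _ _).symm
  rw [RingHom.mapMatrix_apply] at this
  rw [this, hdet, map_zero]

lemma aeval_comm {A N X : Matrix (Fin k) (Fin k) ℂ} (h : A * X = X * N) (q : ℂ[X]) :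
    (Polynomial.aeval A q) * X = X * (Polynomial.aeval N q) := by
  induction q using Polynomial.induction_on with
  | C a => rw [aeval_C, aeval_C, Algebra.commutes]
  | add p q hp hq => rw [map_add, map_add, add_mul, mul_add, hp, hq]
  | monomial j a ih =>
      rw [show C a * Polynomial.X ^ (j + 1) = C a * Polynomial.X ^ j * Polynomial.X by ring]
      have e1 : (Polynomial.aeval A) (C a * Polynomial.X ^ j * Polynomial.X)
          = (Polynomial.aeval A) (C a * Polynomial.X ^ j) * A := by
        rw [_root_.map_mul, aeval_X]
      have e2 : (Polynomial.aeval N) (C a * Polynomial.X ^ j * Polynomial.X)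
          = (Polynomial.aeval N) (C a * Polynomial.X ^ j) * N := by
        rw [_root_.map_mul, aeval_X]
      rw [e1, e2, mul_assoc _ A X, h, ← mul_assoc, ih, mul_assoc]

lemma sylvester_inj_s3 {M N : Matrix (Fin k) (Fin k) ℝ} (hk : 0 < k)
    (hM : IsHurwitz M) (hN : IsHurwitz N)
    {X : Matrix (Fin k) (Fin k) ℝ} (h : Mᵀ * X + X * N = 0) : X = 0 := by
  set f := algebraMap ℝ ℂ with hf
  set A' := (M.map f)ᵀ with hA'
  set N' := N.map f with hN'
  set X' := X.map f with hX'
  have hcomm : A' * X' = X' * (-N') := by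
    have := congrArg (fun Y => (RingHom.mapMatrix f : Matrix (Fin k) (Fin k) ℝ →+* _) Y) h
    simp only [map_add, map_zero, RingHom.mapMatrix_apply] at this
    rw [Matrix.map_mul, Matrix.map_mul, Matrix.transpose_map] at this
    rw [← hA', ← hN', ← hX'] at this
    linear_combination (norm := noncomm_ring) this
  have key : (Polynomial.aeval A' (-N').charpoly) * X' = 0 := by
    rw [aeval_comm hcomm, Matrix.aeval_self_charpoly, mul_zero]
  have hdeg : 0 < (-N').charpoly.degree := by
    rw [Matrix.charpoly_degree_eq_dim]
    simpa using hk
  have hspec := spectrum.map_polynomial_aeval_of_degree_pos A' (-N').charpoly hdeg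
  have hunit : IsUnit (Polynomial.aeval A' (-N').charpoly) := by
    by_contra hu
    rw [← spectrum.zero_mem_iff (R := ℂ), hspec] at hu
    obtain ⟨μ, hμ, hev⟩ := hu
    have hμre : μ.re < 0 := by
      rw [hA', spec_transpose] at hμ
      exact hM μ hμ
    have : μ ∈ spectrum ℂ (-N') := (mem_spec_iff_eval _ _).mpr hev
    rw [← spectrum.neg_eq, Set.mem_neg] at this
    have := hN (-μ) this
    simp only [Complex.neg_re] at this
    linarith
  have hX0 : X' = 0 := by
    calc X' = ↑hunit.unit⁻¹ * (Polynomial.aeval A' (-N').charpoly * X') := by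
              rw [← mul_assoc, IsUnit.val_inv_mul, one_mul]
    _ = 0 := by rw [key, mul_zero]
  ext i j
  have := congrFun (congrFun hX0 i) j
  simp only [Matrix.map_apply, Matrix.zero_apply] at this ⊢
  exact (_root_.map_eq_zero f).mp this

lemma sylvester_existsUnique {k : ℕ} {M N : Matrix (Fin k) (Fin k) ℝ} (hk : 0 < k)
    (hM : IsHurwitz M) (hN : IsHurwitz N) (K : Matrix (Fin k) (Fin k) ℝ) :
    ∃! X : Matrix (Fin k) (Fin k) ℝ, Mᵀ * X + X * N = K := by
  let φ : Matrix (Fin k) (Fin k) ℝ →ₗ[ℝ] Matrix (Fin k) (Fin k) ℝ :=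
    { toFun := fun X => Mᵀ * X + X * N
      map_add' := by intro X Y; simp [Matrix.mul_add, Matrix.add_mul]; abel
      map_smul' := by intro c X; simp [Matrix.mul_smul, Matrix.smul_mul, smul_add] }
  have hinj : Function.Injective φ := by
    rw [← LinearMap.ker_eq_bot, LinearMap.ker_eq_bot']
    intro X hX
    exact sylvester_inj_s3 hk hM hN hX
  have hsurj : Function.Surjective φ := (LinearMap.injective_iff_surjective).mp hinj
  have hbij : Function.Bijective fun X : Matrix (Fin k) (Fin k) ℝ => Mᵀ * X + X * N :=
    ⟨hinj, hsurj⟩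
  exact hbij.existsUnique K

lemma mulVec_existsUnique {k : ℕ} {N : Matrix (Fin k) (Fin k) ℝ} (hN : IsUnit N)
    (v : Fin k → ℝ) : ∃! x : Fin k → ℝ, N.mulVec x = v := by
  have hdet : IsUnit N.det := (Matrix.isUnit_iff_isUnit_det N).mp hN
  refine ⟨N⁻¹.mulVec v, ?_, ?_⟩
  · show N.mulVec (N⁻¹.mulVec v) = v
    rw [Matrix.mulVec_mulVec, Matrix.mul_nonsing_inv _ hdet, Matrix.one_mulVec]
  · intro x hx
    calc x = (N⁻¹ * N).mulVec x := by rw [Matrix.nonsing_inv_mul _ hdet, Matrix.one_mulVec]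
    _ = N⁻¹.mulVec v := by rw [← Matrix.mulVec_mulVec, hx]

lemma hurwitz_isUnit_transpose {k : ℕ} {N : Matrix (Fin k) (Fin k) ℝ} (hN : IsHurwitz N) :
    IsUnit Nᵀ := by
  have := hurwitz_isUnit hN
  rw [Matrix.isUnit_iff_isUnit_det] at this ⊢
  rwa [Matrix.det_transpose]

/-- given symmetric `P`, `Π` with `R + DᵀPD` invertible, the feedback
matrices `Θ* = -(R + DᵀPD)⁻¹(BᵀP + DᵀPC + S)` and
`Θ̄* = -(R + DᵀPD)⁻¹(BᵀΠ + DᵀP(C + C̄) + S)`, and assuming `A + BΘ*` and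
`A + Ā + BΘ̄*` Hurwitz, there exist a unique matrix `P₁`, unique vectors `p, p₁` and a
unique real `c₀` solving the four linear equations (i)–(iv). -/
theorem linear_system_unique_solution {n m : ℕ} (hn : 0 < n) (hm : 0 < m)
    (A Abar C Cbar Q Qbar : Matrix (Fin n) (Fin n) ℝ)
    (B D : Matrix (Fin n) (Fin m) ℝ)
    (S : Matrix (Fin m) (Fin n) ℝ) (R : Matrix (Fin m) (Fin m) ℝ)
    (b sig qv : Fin n → ℝ) (rv : Fin m → ℝ)
    (hQ : Q.IsSymm) (hQbar : Qbar.IsSymm) (hR : R.IsSymm)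
    (P Pi0 : Matrix (Fin n) (Fin n) ℝ) (hP : P.IsSymm) (hPi0 : Pi0.IsSymm)
    (hinv : IsUnit (R + Dᵀ * P * D))
    (Th Thb : Matrix (Fin m) (Fin n) ℝ)
    (hTh : Th = -((R + Dᵀ * P * D)⁻¹ * (Bᵀ * P + Dᵀ * P * C + S)))
    (hThb : Thb = -((R + Dᵀ * P * D)⁻¹ * (Bᵀ * Pi0 + Dᵀ * P * (C + Cbar) + S)))
    (hH1 : IsHurwitz (A + B * Th)) (hH2 : IsHurwitz (A + Abar + B * Thb)) :
    ∃! w : Matrix (Fin n) (Fin n) ℝ × (Fin n → ℝ) × (Fin n → ℝ) × ℝ,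
      -- (i)  the Sylvester-type equation for P₁
      ((A + B * Th)ᵀ * w.1 + w.1 * (A + Abar + B * Thb) + Cᵀ * P * (C + Cbar) + Q
          - P * B * Thb + Thᵀ * (Dᵀ * P * C + Dᵀ * P * Cbar + S) = 0) ∧
      -- (ii) the equation for p
      ((A + Abar + B * Thb)ᵀ.mulVec w.2.1
          + (C + Cbar + D * Thb)ᵀ.mulVec (P.mulVec sig)
          + Thbᵀ.mulVec rv + Pi0.mulVec b + qv = 0) ∧
      -- (iii) the equation for p₁, with θ* := -(R + DᵀPD)⁻¹(Bᵀp + DᵀPσ + r)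
      ((A + B * Th)ᵀ.mulVec w.2.2.1 + P.mulVec b + Cᵀ.mulVec (P.mulVec sig) + qv
          + (w.1 - P).mulVec
              (B.mulVec (-((R + Dᵀ * P * D)⁻¹.mulVec
                  (Bᵀ.mulVec w.2.1 + Dᵀ.mulVec (P.mulVec sig) + rv))) + b)
          + Thbᵀ.mulVec (Dᵀ.mulVec (P.mulVec sig) + rv) = 0) ∧
      -- (iv) the value of c₀
      (w.2.2.2 = 2 * (w.2.1 ⬝ᵥ b) + sig ⬝ᵥ P.mulVec sig
          - (Bᵀ.mulVec w.2.1 + Dᵀ.mulVec (P.mulVec sig) + rv) ⬝ᵥ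
              ((R + Dᵀ * P * D)⁻¹.mulVec
                (Bᵀ.mulVec w.2.1 + Dᵀ.mulVec (P.mulVec sig) + rv))) := by
  set M := A + B * Th with hM
  set Nm := A + Abar + B * Thb with hNm
  set K := Cᵀ * P * (C + Cbar) + Q - P * B * Thb
      + Thᵀ * (Dᵀ * P * C + Dᵀ * P * Cbar + S) with hK
  obtain ⟨P₁, hP₁, huP₁⟩ := sylvester_existsUnique hn hH1 hH2 (-K)
  set v₂ := (C + Cbar + D * Thb)ᵀ.mulVec (P.mulVec sig) + Thbᵀ.mulVec rv
      + Pi0.mulVec b + qv with hv₂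
  obtain ⟨p, hp, hup⟩ := mulVec_existsUnique (hurwitz_isUnit_transpose hH2) (-v₂)
  set v₃ := P.mulVec b + Cᵀ.mulVec (P.mulVec sig) + qv
      + (P₁ - P).mulVec
          (B.mulVec (-((R + Dᵀ * P * D)⁻¹.mulVec
              (Bᵀ.mulVec p + Dᵀ.mulVec (P.mulVec sig) + rv))) + b)
      + Thbᵀ.mulVec (Dᵀ.mulVec (P.mulVec sig) + rv) with hv₃
  obtain ⟨p₁, hp₁, hup₁⟩ := mulVec_existsUnique (hurwitz_isUnit_transpose hH1) (-v₃)
  set c₀ := 2 * (p ⬝ᵥ b) + sig ⬝ᵥ P.mulVec sig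
      - (Bᵀ.mulVec p + Dᵀ.mulVec (P.mulVec sig) + rv) ⬝ᵥ
          ((R + Dᵀ * P * D)⁻¹.mulVec
            (Bᵀ.mulVec p + Dᵀ.mulVec (P.mulVec sig) + rv)) with hc₀
  refine ⟨(P₁, p, p₁, c₀), ⟨?_, ?_, ?_, hc₀⟩, ?_⟩
  · have e : Mᵀ * P₁ + P₁ * Nm + Cᵀ * P * (C + Cbar) + Q - P * B * Thb
        + Thᵀ * (Dᵀ * P * C + Dᵀ * P * Cbar + S) = (Mᵀ * P₁ + P₁ * Nm) + K := by
      rw [hK]; abel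
    rw [e, hP₁]; abel
  · have e : Nmᵀ.mulVec p + (C + Cbar + D * Thb)ᵀ.mulVec (P.mulVec sig)
        + Thbᵀ.mulVec rv + Pi0.mulVec b + qv = Nmᵀ.mulVec p + v₂ := by
      rw [hv₂]; abel
    rw [e, hp]; abel
  · have e : Mᵀ.mulVec p₁ + P.mulVec b + Cᵀ.mulVec (P.mulVec sig) + qv
        + (P₁ - P).mulVec
            (B.mulVec (-((R + Dᵀ * P * D)⁻¹.mulVec
                (Bᵀ.mulVec p + Dᵀ.mulVec (P.mulVec sig) + rv))) + b)
        + Thbᵀ.mulVec (Dᵀ.mulVec (P.mulVec sig) + rv) = Mᵀ.mulVec p₁ + v₃ := by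
      rw [hv₃]; abel
    rw [e, hp₁]; abel
  · rintro ⟨w1, w2, w3, w4⟩ ⟨h1, h2, h3, h4⟩
    have e1 : w1 = P₁ := by
      apply huP₁
      have h : Mᵀ * w1 + w1 * Nm + K = 0 := by rw [hK, ← h1]; abel
      exact eq_neg_of_add_eq_zero_left h
    subst e1
    have e2 : w2 = p := by
      apply hup
      have h : Nmᵀ.mulVec w2 + v₂ = 0 := by rw [hv₂, ← h2]; abel
      exact eq_neg_of_add_eq_zero_left h
    subst e2
    have e3 : w3 = p₁ := by
      apply hup₁
      have h : Mᵀ.mulVec w3 + v₃ = 0 := by rw [hv₃, ← h3]; abel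
      exact eq_neg_of_add_eq_zero_left h
    subst e3
    have e4 : w4 = c₀ := h4.trans hc₀.symm
    subst e4
    rfl
end

section
/- Let T, δ, K₀, λ > 0. Suppose P : [0,T] → (symmetric n×n real matrices) and a symmetric n×n real matrix P∞ satisfy, for all t ∈ [0,T]: ‖P(t) − P∞‖ ≤ K₀ e^{−λ(T−t)}, R + DᵀP(t)D ⪰ δI_m, and R + DᵀP∞D ⪰ δI_m. Define Θ_T(t) = −(R + DᵀP(t)D)⁻¹(BᵀP(t) + DᵀP(t)C + S) and Θ∞ = −(R + DᵀP∞D)⁻¹(BᵀP∞ + DᵀP∞C + S). Then there exists a constant K > 0, depending only on B, C, D, S, R, δ, K₀ and ‖P∞‖ but not on T, such that ‖Θ_T(t) − Θ∞‖ ≤ K e^{−λ(T−t)} for all t ∈ [0,T]. -/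
open Matrix

/-- Frobenius norm of a real matrix. -/
noncomputable def frobNorm {k l : ℕ} (M : Matrix (Fin k) (Fin l) ℝ) : ℝ :=
  Real.sqrt (∑ i, ∑ j, (M i j) ^ 2)

section Aux

attribute [local instance] Matrix.frobeniusNormedAddCommGroup

lemma frobNorm_eq_norm {k l : ℕ} (M : Matrix (Fin k) (Fin l) ℝ) : frobNorm M = ‖M‖ := by
  rw [frobNorm, Matrix.frobenius_norm_def, Real.sqrt_eq_rpow]
  congr 1
  refine Finset.sum_congr rfl fun i _ => Finset.sum_congr rfl fun j _ => ?_
  rw [Real.norm_eq_abs, Real.rpow_two, sq_abs]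

lemma coercive_quad {m : ℕ} {A : Matrix (Fin m) (Fin m) ℝ} {δ : ℝ}
    (h : (A - δ • (1 : Matrix (Fin m) (Fin m) ℝ)).PosSemidef) (x : Fin m → ℝ) :
    δ * (x ⬝ᵥ x) ≤ x ⬝ᵥ (A *ᵥ x) := by
  have h0 := h.dotProduct_mulVec_nonneg x
  simp only [star_trivial, sub_mulVec, dotProduct_sub, smul_mulVec, one_mulVec,
    dotProduct_smul, smul_eq_mul] at h0
  linarith

lemma coercive_posDef {m : ℕ} {A : Matrix (Fin m) (Fin m) ℝ} {δ : ℝ} (hδ : 0 < δ)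
    (h : (A - δ • (1 : Matrix (Fin m) (Fin m) ℝ)).PosSemidef) : A.PosDef := by
  refine Matrix.posDef_iff_dotProduct_mulVec.mpr ⟨?_, ?_⟩
  · have h1 := h.1
    have h2 : (δ • (1 : Matrix (Fin m) (Fin m) ℝ)).IsHermitian := by
      simp [Matrix.IsHermitian]
    simpa using h1.add h2
  · intro x hx
    have hxx : 0 < x ⬝ᵥ x := by
      rcases lt_or_eq_of_le (Finset.sum_nonneg (fun i _ => mul_self_nonneg (x i))) with h' | h'
      · exact h'
      · exact absurd (dotProduct_self_eq_zero.mp h'.symm) hx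
    calc (0:ℝ) < δ * (x ⬝ᵥ x) := by positivity
      _ ≤ x ⬝ᵥ (A *ᵥ x) := coercive_quad h x
      _ = star x ⬝ᵥ (A *ᵥ x) := by simp

lemma inv_norm_le {m : ℕ} {A : Matrix (Fin m) (Fin m) ℝ} {δ : ℝ} (hδ : 0 < δ)
    (h : (A - δ • (1 : Matrix (Fin m) (Fin m) ℝ)).PosSemidef) :
    ‖A⁻¹‖ ≤ Real.sqrt m / δ := by
  have hPD := coercive_posDef hδ h
  have hdetu : IsUnit A.det := (Matrix.isUnit_iff_isUnit_det A).1 hPD.isUnit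
  have hAAi : A * A⁻¹ = 1 := Matrix.mul_nonsing_inv A hdetu
  have hcol : ∀ j, ∑ i, (A⁻¹ i j) ^ 2 ≤ 1 / δ ^ 2 := by
    intro j
    set y : Fin m → ℝ := A⁻¹ *ᵥ Pi.single j 1 with hy
    have hyc : ∀ i, y i = A⁻¹ i j := by
      intro i; simp [hy, Matrix.mulVec_single]
    have hAy : A *ᵥ y = Pi.single j 1 := by
      rw [hy, Matrix.mulVec_mulVec, hAAi, Matrix.one_mulVec]
    have hyy0 : (0:ℝ) ≤ y ⬝ᵥ y := Finset.sum_nonneg (fun i _ => mul_self_nonneg (y i))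
    have h1 : y ⬝ᵥ (A *ᵥ y) = y j := by rw [hAy]; simp [dotProduct_single]
    have h2 : y j ≤ Real.sqrt (y ⬝ᵥ y) := by
      have hsq : (y j) ^ 2 ≤ y ⬝ᵥ y := by
        have := Finset.single_le_sum (f := fun i => y i * y i)
          (fun i _ => mul_self_nonneg (y i)) (Finset.mem_univ j)
        simpa [dotProduct, sq] using this
      calc y j ≤ |y j| := le_abs_self _
        _ = Real.sqrt ((y j) ^ 2) := (Real.sqrt_sq_eq_abs _).symm
        _ ≤ _ := Real.sqrt_le_sqrt hsq
    have h3 : δ * (y ⬝ᵥ y) ≤ Real.sqrt (y ⬝ᵥ y) := (coercive_quad h y).trans (h1 ▸ h2)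
    have hs : Real.sqrt (y ⬝ᵥ y) ^ 2 = y ⬝ᵥ y := Real.sq_sqrt hyy0
    have hkey : (y ⬝ᵥ y) * δ ^ 2 ≤ 1 := by
      nlinarith [Real.sqrt_nonneg (y ⬝ᵥ y), sq_nonneg (δ * Real.sqrt (y ⬝ᵥ y) - 1),
        mul_le_mul_of_nonneg_left h3 hδ.le]
    have : y ⬝ᵥ y ≤ 1 / δ ^ 2 := by
      rw [le_div_iff₀ (by positivity)]; exact hkey
    calc ∑ i, (A⁻¹ i j) ^ 2 = y ⬝ᵥ y := by
          rw [dotProduct]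
          exact Finset.sum_congr rfl fun i _ => by rw [hyc i, sq]
      _ ≤ 1 / δ ^ 2 := this
  rw [← frobNorm_eq_norm, frobNorm, Finset.sum_comm]
  have hsum : ∑ j, ∑ i, (A⁻¹ i j) ^ 2 ≤ (m : ℝ) * (1 / δ ^ 2) := by
    calc ∑ j, ∑ i, (A⁻¹ i j) ^ 2 ≤ ∑ _j : Fin m, 1 / δ ^ 2 :=
          Finset.sum_le_sum fun j _ => hcol j
      _ = (m : ℝ) * (1 / δ ^ 2) := by simp [Finset.sum_const, mul_comm]
  calc Real.sqrt (∑ j, ∑ i, (A⁻¹ i j) ^ 2) ≤ Real.sqrt ((m : ℝ) * (1 / δ ^ 2)) :=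
        Real.sqrt_le_sqrt hsum
    _ = Real.sqrt m / δ := by
        rw [Real.sqrt_mul (Nat.cast_nonneg m)]
        rw [show (1 : ℝ) / δ ^ 2 = (1 / δ) ^ 2 by ring, Real.sqrt_sq (by positivity)]
        ring

lemma theta_diff_identity {m n : ℕ} (a ai b bi : Matrix (Fin m) (Fin m) ℝ)
    (x y : Matrix (Fin m) (Fin n) ℝ) (h1 : ai * a = 1) (h2 : b * bi = 1) :
    -(ai * x) - -(bi * y) = ai * (y - x) + ai * (a - b) * (bi * y) := by
  have h3 : ai * (a - b) * (bi * y) = bi * y - ai * y := by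
    rw [Matrix.mul_sub, h1, Matrix.sub_mul, Matrix.one_mul, Matrix.mul_assoc ai b (bi * y),
      ← Matrix.mul_assoc b bi y, h2, Matrix.one_mul]
  rw [h3, Matrix.mul_sub]
  abel

end Aux

section Main

attribute [local instance] Matrix.frobeniusNormedAddCommGroup

/-- exponential convergence `‖P(t) - P∞‖ ≤ K₀ e^{-λ(T-t)}` together with
the uniform coercivity `R + DᵀP(t)D ⪰ δ I`, `R + DᵀP∞D ⪰ δ I` implies exponential
convergence of the feedback gains `Θ_T(t)` to `Θ∞`, with a constant independent of
`T`. -/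
theorem feedback_gain_convergence {n m : ℕ} (hn : 0 < n) (hm : 0 < m)
    (B D : Matrix (Fin n) (Fin m) ℝ) (C : Matrix (Fin n) (Fin n) ℝ)
    (S : Matrix (Fin m) (Fin n) ℝ) (R : Matrix (Fin m) (Fin m) ℝ) (hR : R.IsSymm)
    (δ K₀ lam : ℝ) (hδ : 0 < δ) (hK₀ : 0 < K₀) (hlam : 0 < lam)
    (Pinf : Matrix (Fin n) (Fin n) ℝ) (hPinf : Pinf.IsSymm)
    (hRinf : ((R + Dᵀ * Pinf * D) - δ • (1 : Matrix (Fin m) (Fin m) ℝ)).PosSemidef) :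
    ∃ K > (0:ℝ), ∀ T : ℝ, 0 < T → ∀ P : ℝ → Matrix (Fin n) (Fin n) ℝ,
      (∀ t ∈ Set.Icc (0:ℝ) T, (P t).IsSymm) →
      (∀ t ∈ Set.Icc (0:ℝ) T, frobNorm (P t - Pinf) ≤ K₀ * Real.exp (-lam * (T - t))) →
      (∀ t ∈ Set.Icc (0:ℝ) T,
        ((R + Dᵀ * P t * D) - δ • (1 : Matrix (Fin m) (Fin m) ℝ)).PosSemidef) →
      ∀ t ∈ Set.Icc (0:ℝ) T,
        frobNorm (-((R + Dᵀ * P t * D)⁻¹ * (Bᵀ * P t + Dᵀ * P t * C + S))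
            - -((R + Dᵀ * Pinf * D)⁻¹ * (Bᵀ * Pinf + Dᵀ * Pinf * C + S)))
          ≤ K * Real.exp (-lam * (T - t)) := by
  set s : ℝ := Real.sqrt m / δ with hs
  set Minf : Matrix (Fin m) (Fin n) ℝ := Bᵀ * Pinf + Dᵀ * Pinf * C + S with hMinf
  set c : ℝ := s * (‖Bᵀ‖ + ‖Dᵀ‖ * ‖C‖) + s * s * (‖Dᵀ‖ * ‖D‖) * ‖Minf‖ with hc
  have hs0 : 0 ≤ s := by positivity
  have hc0 : 0 ≤ c := by positivity
  refine ⟨c * K₀ + 1, by positivity, ?_⟩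
  intro T hT P hPsymm hPconv hPcoer t ht
  set A : Matrix (Fin m) (Fin m) ℝ := R + Dᵀ * P t * D with hA
  set Ainf : Matrix (Fin m) (Fin m) ℝ := R + Dᵀ * Pinf * D with hAinf
  set Mt : Matrix (Fin m) (Fin n) ℝ := Bᵀ * P t + Dᵀ * P t * C + S with hMt
  have hAinv : ‖A⁻¹‖ ≤ s := inv_norm_le hδ (hPcoer t ht)
  have hAinfinv : ‖Ainf⁻¹‖ ≤ s := inv_norm_le hδ hRinf
  have hA1 : A⁻¹ * A = 1 :=
    Matrix.nonsing_inv_mul A ((Matrix.isUnit_iff_isUnit_det A).1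
      (coercive_posDef hδ (hPcoer t ht)).isUnit)
  have hA2 : Ainf * Ainf⁻¹ = 1 :=
    Matrix.mul_nonsing_inv Ainf ((Matrix.isUnit_iff_isUnit_det Ainf).1
      (coercive_posDef hδ hRinf).isUnit)
  have hid := theta_diff_identity A A⁻¹ Ainf Ainf⁻¹ Mt Minf hA1 hA2
  have hE : ‖P t - Pinf‖ ≤ K₀ * Real.exp (-lam * (T - t)) := by
    rw [← frobNorm_eq_norm]; exact hPconv t ht
  have hE0 : (0:ℝ) ≤ ‖P t - Pinf‖ := norm_nonneg _
  have hMdiff : ‖Minf - Mt‖ ≤ (‖Bᵀ‖ + ‖Dᵀ‖ * ‖C‖) * ‖P t - Pinf‖ := by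
    have hrepr : Minf - Mt = Bᵀ * (Pinf - P t) + Dᵀ * (Pinf - P t) * C := by
      rw [hMinf, hMt]
      simp only [Matrix.mul_sub, Matrix.sub_mul]
      abel
    calc ‖Minf - Mt‖ = ‖Bᵀ * (Pinf - P t) + Dᵀ * (Pinf - P t) * C‖ := by rw [hrepr]
      _ ≤ ‖Bᵀ * (Pinf - P t)‖ + ‖Dᵀ * (Pinf - P t) * C‖ := norm_add_le _ _
      _ ≤ ‖Bᵀ‖ * ‖Pinf - P t‖ + ‖Dᵀ‖ * ‖Pinf - P t‖ * ‖C‖ := by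
          refine add_le_add (Matrix.frobenius_norm_mul _ _) ?_
          calc ‖Dᵀ * (Pinf - P t) * C‖ ≤ ‖Dᵀ * (Pinf - P t)‖ * ‖C‖ :=
                Matrix.frobenius_norm_mul _ _
            _ ≤ ‖Dᵀ‖ * ‖Pinf - P t‖ * ‖C‖ :=
                mul_le_mul_of_nonneg_right (Matrix.frobenius_norm_mul _ _) (norm_nonneg C)
      _ = (‖Bᵀ‖ + ‖Dᵀ‖ * ‖C‖) * ‖P t - Pinf‖ := by rw [norm_sub_rev]; ring
  have hAdiff : ‖A - Ainf‖ ≤ ‖Dᵀ‖ * ‖D‖ * ‖P t - Pinf‖ := by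
    have hrepr : A - Ainf = Dᵀ * (P t - Pinf) * D := by
      rw [hA, hAinf]
      simp only [Matrix.mul_sub, Matrix.sub_mul]
      abel
    calc ‖A - Ainf‖ = ‖Dᵀ * (P t - Pinf) * D‖ := by rw [hrepr]
      _ ≤ ‖Dᵀ * (P t - Pinf)‖ * ‖D‖ := Matrix.frobenius_norm_mul _ _
      _ ≤ ‖Dᵀ‖ * ‖P t - Pinf‖ * ‖D‖ :=
          mul_le_mul_of_nonneg_right (Matrix.frobenius_norm_mul _ _) (norm_nonneg D)
      _ = ‖Dᵀ‖ * ‖D‖ * ‖P t - Pinf‖ := by ring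
  have n1 : ‖A⁻¹ * (Minf - Mt)‖ ≤ s * ((‖Bᵀ‖ + ‖Dᵀ‖ * ‖C‖) * ‖P t - Pinf‖) := by
    calc ‖A⁻¹ * (Minf - Mt)‖ ≤ ‖A⁻¹‖ * ‖Minf - Mt‖ := Matrix.frobenius_norm_mul _ _
      _ ≤ s * ((‖Bᵀ‖ + ‖Dᵀ‖ * ‖C‖) * ‖P t - Pinf‖) :=
          mul_le_mul hAinv hMdiff (norm_nonneg _) hs0
  have n2 : ‖A⁻¹ * (A - Ainf) * (Ainf⁻¹ * Minf)‖ ≤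
      s * (‖Dᵀ‖ * ‖D‖ * ‖P t - Pinf‖) * (s * ‖Minf‖) := by
    calc ‖A⁻¹ * (A - Ainf) * (Ainf⁻¹ * Minf)‖
        ≤ ‖A⁻¹ * (A - Ainf)‖ * ‖Ainf⁻¹ * Minf‖ := Matrix.frobenius_norm_mul _ _
      _ ≤ (s * (‖Dᵀ‖ * ‖D‖ * ‖P t - Pinf‖)) * (s * ‖Minf‖) := by
          refine mul_le_mul ?_ ?_ (norm_nonneg _) (by positivity)
          · calc ‖A⁻¹ * (A - Ainf)‖ ≤ ‖A⁻¹‖ * ‖A - Ainf‖ := Matrix.frobenius_norm_mul _ _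
              _ ≤ s * (‖Dᵀ‖ * ‖D‖ * ‖P t - Pinf‖) :=
                  mul_le_mul hAinv hAdiff (norm_nonneg _) hs0
          · calc ‖Ainf⁻¹ * Minf‖ ≤ ‖Ainf⁻¹‖ * ‖Minf‖ := Matrix.frobenius_norm_mul _ _
              _ ≤ s * ‖Minf‖ := mul_le_mul_of_nonneg_right hAinfinv (norm_nonneg _)
  have hexp : (0:ℝ) < Real.exp (-lam * (T - t)) := Real.exp_pos _
  have hfinal : ‖-(A⁻¹ * Mt) - -(Ainf⁻¹ * Minf)‖ ≤ c * ‖P t - Pinf‖ := by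
    calc ‖-(A⁻¹ * Mt) - -(Ainf⁻¹ * Minf)‖
        = ‖A⁻¹ * (Minf - Mt) + A⁻¹ * (A - Ainf) * (Ainf⁻¹ * Minf)‖ := by rw [hid]
      _ ≤ ‖A⁻¹ * (Minf - Mt)‖ + ‖A⁻¹ * (A - Ainf) * (Ainf⁻¹ * Minf)‖ := norm_add_le _ _
      _ ≤ s * ((‖Bᵀ‖ + ‖Dᵀ‖ * ‖C‖) * ‖P t - Pinf‖)
          + s * (‖Dᵀ‖ * ‖D‖ * ‖P t - Pinf‖) * (s * ‖Minf‖) := add_le_add n1 n2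
      _ = c * ‖P t - Pinf‖ := by rw [hc]; ring
  rw [frobNorm_eq_norm]
  calc ‖-(A⁻¹ * Mt) - -(Ainf⁻¹ * Minf)‖ ≤ c * ‖P t - Pinf‖ := hfinal
    _ ≤ c * (K₀ * Real.exp (-lam * (T - t))) := mul_le_mul_of_nonneg_left hE hc0
    _ ≤ (c * K₀ + 1) * Real.exp (-lam * (T - t)) := by nlinarith

end Main
end

section
/- Let T > 0, let M be an n×n real matrix, and let K₀, K₁, K₂, λ₁, λ₂ > 0 with λ₁ ≠ λ₂ and ‖exp(tMᵀ)‖ ≤ K₂ e^{−λ₂ t} for all t ≥ 0. Suppose q : [0,T] → ℝⁿ is differentiable with q′(t) = −Mᵀ q(t) − h(t) for all t ∈ [0,T], where h : [0,T] → ℝⁿ is continuous with |h(t)| ≤ K₁ e^{−λ₁(T−t)}, and |q(T)| ≤ K₀. Then there exists a constant K > 0 depending only on K₀, K₁, K₂, λ₁, λ₂ (and not on T) such that |q(t)| ≤ K e^{−λ(T−t)} for all t ∈ [0,T], where λ = min{λ₁, λ₂}. -/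
open Matrix

/-- Euclidean norm of a vector in `ℝⁿ`. -/
noncomputable def eNorm {k : ℕ} (v : Fin k → ℝ) : ℝ :=
  Real.sqrt (∑ i, (v i) ^ 2)

/-- Matrix exponential of a real square matrix. -/
noncomputable def matExp {k : ℕ} (M : Matrix (Fin k) (Fin k) ℝ) : Matrix (Fin k) (Fin k) ℝ :=
  NormedSpace.exp M

/- ### Auxiliary lemmas -/

noncomputable def toEuc {k : ℕ} : (Fin k → ℝ) →L[ℝ] EuclideanSpace ℝ (Fin k) :=
  (EuclideanSpace.equiv (Fin k) ℝ).symm.toContinuousLinearMap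

lemma toEuc_apply {k : ℕ} (v : Fin k → ℝ) (i : Fin k) : toEuc v i = v i := rfl

lemma norm_toEuc {k : ℕ} (v : Fin k → ℝ) : ‖toEuc v‖ = eNorm v := by
  rw [EuclideanSpace.norm_eq]
  simp only [toEuc_apply]
  simp [eNorm, Real.norm_eq_abs, sq_abs]

lemma eNorm_nonneg' {k : ℕ} (v : Fin k → ℝ) : 0 ≤ eNorm v := Real.sqrt_nonneg _

lemma eNorm_neg {k : ℕ} (v : Fin k → ℝ) : eNorm (-v) = eNorm v := by
  simp [eNorm]

lemma eNorm_mulVec_le {k : ℕ} (M : Matrix (Fin k) (Fin k) ℝ) (v : Fin k → ℝ) :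
    eNorm (M.mulVec v) ≤ frobNorm M * eNorm v := by
  rw [eNorm, eNorm, frobNorm, ← Real.sqrt_mul (by positivity)]
  apply Real.sqrt_le_sqrt
  rw [Finset.sum_mul]
  apply Finset.sum_le_sum
  intro i _
  calc (M.mulVec v i) ^ 2 = (∑ j, M i j * v j) ^ 2 := by
        simp [Matrix.mulVec, dotProduct]
    _ ≤ (∑ j, (M i j) ^ 2) * (∑ j, (v j) ^ 2) :=
        Finset.sum_mul_sq_le_sq_mul_sq _ _ _

section MatDeriv
attribute [local instance] Matrix.linftyOpNormedRing Matrix.linftyOpNormedAlgebra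

lemma hasDerivAt_matExp_entry {k : ℕ} (A : Matrix (Fin k) (Fin k) ℝ) (s : ℝ) (i j : Fin k) :
    HasDerivAt (fun u : ℝ => matExp (u • A) i j) ((matExp (s • A) * A) i j) s := by
  have h1 : HasDerivAt (fun u : ℝ => NormedSpace.exp (u • A))
      (NormedSpace.exp (s • A) * A) s := hasDerivAt_exp_smul_const A s
  have hc : Continuous (fun M : Matrix (Fin k) (Fin k) ℝ => M i j) :=
    continuous_id.matrix_elem i j
  let L : Matrix (Fin k) (Fin k) ℝ →L[ℝ] ℝ :=
    { toFun := fun M => M i j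
      map_add' := fun _ _ => rfl
      map_smul' := fun _ _ => rfl
      cont := hc }
  exact L.hasFDerivAt.comp_hasDerivAt s h1

end MatDeriv

lemma continuous_matExp_entry {k : ℕ} (A : Matrix (Fin k) (Fin k) ℝ) (i j : Fin k) :
    Continuous (fun u : ℝ => matExp (u • A) i j) :=
  continuous_iff_continuousAt.2 fun s => (hasDerivAt_matExp_entry A s i j).continuousAt

/-- Derivative of `u ↦ exp((u-t)A) q(u)` when `q' = -Aq - h`. -/
lemma hasDerivAt_expMulVec {n : ℕ} (A : Matrix (Fin n) (Fin n) ℝ) (q h : ℝ → Fin n → ℝ)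
    (t s : ℝ) (hqs : HasDerivAt q (-(A.mulVec (q s)) - h s) s) :
    HasDerivAt (fun u => (matExp ((u - t) • A)).mulVec (q u))
      (-(matExp ((s - t) • A)).mulVec (h s)) s := by
  set E : ℝ → Matrix (Fin n) (Fin n) ℝ := fun u => matExp ((u - t) • A) with hE
  have hEd : ∀ i j, HasDerivAt (fun u => E u i j) ((E s * A) i j) s := by
    intro i j
    have h1 := hasDerivAt_matExp_entry A (s - t) i j
    have h2 : HasDerivAt (fun u : ℝ => u - t) 1 s := (hasDerivAt_id s).sub_const t
    simpa [hE, Function.comp_def] using h1.comp s h2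
  have hq' : ∀ i, HasDerivAt (fun u => q u i) ((-(A.mulVec (q s)) - h s) i) s :=
    fun i => hasDerivAt_pi.1 hqs i
  rw [hasDerivAt_pi]
  intro i
  have hsum : HasDerivAt (fun u => ∑ j, E u i j * q u j)
      (∑ j, ((E s * A) i j * q s j + E s i j * ((-(A.mulVec (q s)) - h s) j))) s := by
    apply HasDerivAt.fun_sum
    intro j _
    exact (hEd i j).mul (hq' j)
  have heq : (∑ j, ((E s * A) i j * q s j + E s i j * ((-(A.mulVec (q s)) - h s) j)))
      = (-(E s).mulVec (h s)) i := by
    have h3 : ∑ j, (E s * A) i j * q s j = ∑ j, E s i j * (A.mulVec (q s)) j := by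
      simp only [Matrix.mul_apply, Finset.sum_mul, Matrix.mulVec, dotProduct,
        Finset.mul_sum, mul_assoc]
      rw [Finset.sum_comm]
    rw [Finset.sum_add_distrib, h3]
    have h2 : ∑ j, E s i j * ((-(A.mulVec (q s)) - h s) j)
        = -(∑ j, E s i j * (A.mulVec (q s)) j) - ∑ j, E s i j * h s j := by
      simp only [Pi.sub_apply, Pi.neg_apply, mul_sub, mul_neg,
        Finset.sum_sub_distrib, Finset.sum_neg_distrib]
    rw [h2]
    simp only [Matrix.mulVec, dotProduct, Pi.neg_apply]
    ring
  rw [← heq]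
  exact hsum

lemma integral_exp_decay_left {δ t T : ℝ} (hδ : 0 < δ) :
    ∫ s in t..T, Real.exp (-δ * (s - t)) ≤ 1 / δ := by
  have hder : ∀ s ∈ Set.uIcc t T, HasDerivAt (fun u => -(1/δ) * Real.exp (-δ * (u - t)))
      (Real.exp (-δ * (s - t))) s := by
    intro s _
    have h1 : HasDerivAt (fun u : ℝ => -δ * (u - t)) (-δ) s := by
      simpa using (((hasDerivAt_id s).sub_const t).const_mul (-δ))
    have h2 := (h1.exp).const_mul (-(1/δ))
    convert h2 using 1
    · rfl
    · rfl
    field_simp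
  have hint : IntervalIntegrable (fun s => Real.exp (-δ * (s - t))) MeasureTheory.volume t T :=
    (Real.continuous_exp.comp (by continuity)).intervalIntegrable t T
  rw [intervalIntegral.integral_eq_sub_of_hasDerivAt hder hint]
  have h0 : Real.exp (-δ * (t - t)) = 1 := by simp
  rw [h0, div_eq_mul_inv]
  nlinarith [Real.exp_pos (-δ * (T - t)), mul_pos (Real.exp_pos (-δ * (T - t))) (inv_pos.2 hδ)]

lemma integral_exp_decay_right {δ t T : ℝ} (hδ : 0 < δ) :
    ∫ s in t..T, Real.exp (-δ * (T - s)) ≤ 1 / δ := by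
  have hder : ∀ s ∈ Set.uIcc t T, HasDerivAt (fun u => (1/δ) * Real.exp (-δ * (T - u)))
      (Real.exp (-δ * (T - s))) s := by
    intro s _
    have h1 : HasDerivAt (fun u : ℝ => -δ * (T - u)) δ s := by
      have := ((hasDerivAt_id s).neg.add_const T).const_mul (-δ)
      convert this using 2 <;> [rfl; rfl; simp [id, sub_eq_neg_add]; simp [id, sub_eq_neg_add]]
    have h2 := (h1.exp).const_mul (1/δ)
    convert h2 using 1
    · rfl
    · rfl
    field_simp
  have hint : IntervalIntegrable (fun s => Real.exp (-δ * (T - s))) MeasureTheory.volume t T :=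
    (Real.continuous_exp.comp (by continuity)).intervalIntegrable t T
  rw [intervalIntegral.integral_eq_sub_of_hasDerivAt hder hint]
  have h0 : Real.exp (-δ * (T - T)) = 1 := by simp
  rw [h0, div_eq_mul_inv]
  nlinarith [Real.exp_pos (-δ * (T - t)), mul_pos (Real.exp_pos (-δ * (T - t))) (inv_pos.2 hδ)]

lemma key_ptwise {lam₁ lam₂ t s T : ℝ} :
    Real.exp (-lam₂ * (s - t)) * Real.exp (-lam₁ * (T - s)) ≤
      Real.exp (-(min lam₁ lam₂) * (T - t)) *
        (Real.exp (-|lam₁ - lam₂| * (s - t)) + Real.exp (-|lam₁ - lam₂| * (T - s))) := by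
  rcases le_total lam₁ lam₂ with hc | hc
  · rw [min_eq_left hc, abs_of_nonpos (by linarith), ← Real.exp_add, neg_sub]
    have : -lam₂ * (s - t) + -lam₁ * (T - s) = -lam₁ * (T - t) + -(lam₂ - lam₁) * (s - t) := by ring
    rw [this, Real.exp_add, mul_add]
    nlinarith [Real.exp_pos (-lam₁ * (T - t)), Real.exp_pos (-(lam₂ - lam₁) * (T - s)),
      mul_pos (Real.exp_pos (-lam₁ * (T - t))) (Real.exp_pos (-(lam₂ - lam₁) * (T - s)))]
  · rw [min_eq_right hc, abs_of_nonneg (by linarith), ← Real.exp_add]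
    have : -lam₂ * (s - t) + -lam₁ * (T - s) = -lam₂ * (T - t) + -(lam₁ - lam₂) * (T - s) := by ring
    rw [this, Real.exp_add, mul_add]
    nlinarith [Real.exp_pos (-lam₂ * (T - t)), Real.exp_pos (-(lam₁ - lam₂) * (s - t)),
      mul_pos (Real.exp_pos (-lam₂ * (T - t))) (Real.exp_pos (-(lam₁ - lam₂) * (s - t)))]

/-- backward linear ODE estimate.  If `‖exp(tMᵀ)‖ ≤ K₂ e^{-λ₂ t}`,
`q' = -Mᵀ q - h` on `[0, T]` with `|h(t)| ≤ K₁ e^{-λ₁(T-t)}` and `|q(T)| ≤ K₀`, then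
`|q(t)| ≤ K e^{-λ(T-t)}` with `λ = min{λ₁, λ₂}` and `K` independent of `T`. -/
theorem backward_ode_estimate {n : ℕ} (hn : 0 < n)
    (K₀ K₁ K₂ lam₁ lam₂ : ℝ)
    (hK₀ : 0 < K₀) (hK₁ : 0 < K₁) (hK₂ : 0 < K₂)
    (hlam₁ : 0 < lam₁) (hlam₂ : 0 < lam₂) (hne : lam₁ ≠ lam₂) :
    ∃ K > (0:ℝ), ∀ T : ℝ, 0 < T → ∀ M : Matrix (Fin n) (Fin n) ℝ,
      (∀ t : ℝ, 0 ≤ t → frobNorm (matExp (t • Mᵀ)) ≤ K₂ * Real.exp (-lam₂ * t)) →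
      ∀ q h : ℝ → Fin n → ℝ,
        ContinuousOn h (Set.Icc 0 T) →
        (∀ t ∈ Set.Icc (0:ℝ) T, HasDerivAt q (-(Mᵀ.mulVec (q t)) - h t) t) →
        (∀ t ∈ Set.Icc (0:ℝ) T, eNorm (h t) ≤ K₁ * Real.exp (-lam₁ * (T - t))) →
        eNorm (q T) ≤ K₀ →
        ∀ t ∈ Set.Icc (0:ℝ) T,
          eNorm (q t) ≤ K * Real.exp (-(min lam₁ lam₂) * (T - t)) := by
  set lam := min lam₁ lam₂ with hlam
  set δ := |lam₁ - lam₂| with hδdef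
  have hδ : 0 < δ := abs_pos.2 (sub_ne_zero.2 hne)
  refine ⟨K₂ * K₀ + 2 * K₁ * K₂ / δ, by positivity, ?_⟩
  intro T hT M hM q h hhcont hq hhb hqT t ht
  obtain ⟨ht0, htT⟩ := ht
  set A := Mᵀ with hA
  set E : ℝ → Matrix (Fin n) (Fin n) ℝ := fun u => matExp ((u - t) • A) with hE
  set G : ℝ → Fin n → ℝ := fun s => (E s).mulVec (q s) with hG
  set F : ℝ → EuclideanSpace ℝ (Fin n) := fun s => toEuc (G s) with hF
  set F' : ℝ → EuclideanSpace ℝ (Fin n) := fun s => toEuc (-(E s).mulVec (h s)) with hF'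
  have hsub : Set.Icc t T ⊆ Set.Icc (0:ℝ) T := Set.Icc_subset_Icc ht0 le_rfl
  -- derivative of F
  have hFd : ∀ s ∈ Set.uIcc t T, HasDerivAt F (F' s) s := by
    intro s hs
    rw [Set.uIcc_of_le htT] at hs
    have hs0 : s ∈ Set.Icc (0:ℝ) T := hsub hs
    have hGd : HasDerivAt G (-(E s).mulVec (h s)) s :=
      hasDerivAt_expMulVec A q h t s (hq s hs0)
    exact toEuc.hasFDerivAt.comp_hasDerivAt s hGd
  -- continuity and integrability of F'
  have hEcont : ∀ i j, Continuous fun u => E u i j := by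
    intro i j
    exact (continuous_matExp_entry A i j).comp (continuous_id.sub continuous_const)
  have hF'cont : ContinuousOn F' (Set.Icc t T) := by
    apply toEuc.continuous.comp_continuousOn
    have : ContinuousOn (fun s => (E s).mulVec (h s)) (Set.Icc t T) := by
      apply continuousOn_pi.2
      intro i
      simp only [Matrix.mulVec, dotProduct]
      apply continuousOn_finset_sum
      intro j _
      exact ((hEcont i j).continuousOn).mul
        ((continuous_apply j).comp_continuousOn (hhcont.mono hsub))
    exact this.neg
  have hF'int : IntervalIntegrable F' MeasureTheory.volume t T := by
    apply ContinuousOn.intervalIntegrable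
    rwa [Set.uIcc_of_le htT]
  -- FTC
  have hFTC : ∫ s in t..T, F' s = F T - F t :=
    intervalIntegral.integral_eq_sub_of_hasDerivAt hFd hF'int
  -- F t = toEuc (q t)
  have hEt : E t = 1 := by
    simp only [hE, sub_self, zero_smul, matExp, NormedSpace.exp_zero]
  have hFt : F t = toEuc (q t) := by
    simp only [hF, hG, hEt, Matrix.one_mulVec]
  -- bound ‖F T‖
  have hTt : (0:ℝ) ≤ T - t := by linarith
  have hFT : ‖F T‖ ≤ K₂ * Real.exp (-lam₂ * (T - t)) * K₀ := by
    rw [hF, norm_toEuc]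
    calc eNorm (G T) ≤ frobNorm (E T) * eNorm (q T) := eNorm_mulVec_le _ _
      _ ≤ K₂ * Real.exp (-lam₂ * (T - t)) * K₀ := by
          apply mul_le_mul (hM (T - t) hTt) hqT (eNorm_nonneg' _) (by positivity)
  -- bound the integral
  set g : ℝ → ℝ := fun s => K₁ * K₂ * Real.exp (-lam * (T - t)) *
    (Real.exp (-δ * (s - t)) + Real.exp (-δ * (T - s))) with hg
  have hc1 : Continuous fun s : ℝ => Real.exp (-δ * (s - t)) :=
    Real.continuous_exp.comp (continuous_const.mul (continuous_id.sub continuous_const))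
  have hc2 : Continuous fun s : ℝ => Real.exp (-δ * (T - s)) :=
    Real.continuous_exp.comp (continuous_const.mul (continuous_const.sub continuous_id))
  have hgcont : Continuous g := continuous_const.mul (hc1.add hc2)
  have hbound : ‖∫ s in t..T, F' s‖ ≤ |∫ s in t..T, g s| := by
    apply intervalIntegral.norm_integral_le_abs_of_norm_le _ (hgcont.intervalIntegrable t T)
    filter_upwards [MeasureTheory.ae_restrict_mem measurableSet_uIoc] with s hs
    rw [Set.uIoc_of_le htT] at hs
    have hs0 : s ∈ Set.Icc (0:ℝ) T := ⟨by linarith [hs.1], hs.2⟩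
    have hst : (0:ℝ) ≤ s - t := by linarith [hs.1]
    calc ‖F' s‖ = eNorm (-(E s).mulVec (h s)) := norm_toEuc _
      _ = eNorm ((E s).mulVec (h s)) := eNorm_neg _
      _ ≤ frobNorm (E s) * eNorm (h s) := eNorm_mulVec_le _ _
      _ ≤ (K₂ * Real.exp (-lam₂ * (s - t))) * (K₁ * Real.exp (-lam₁ * (T - s))) := by
          apply mul_le_mul (hM (s - t) hst) (hhb s hs0) (eNorm_nonneg' _) (by positivity)
      _ = K₁ * K₂ * (Real.exp (-lam₂ * (s - t)) * Real.exp (-lam₁ * (T - s))) := by ring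
      _ ≤ K₁ * K₂ * (Real.exp (-lam * (T - t)) *
            (Real.exp (-δ * (s - t)) + Real.exp (-δ * (T - s)))) := by
          apply mul_le_mul_of_nonneg_left key_ptwise (by positivity)
      _ = g s := by rw [hg]; ring
  have hgint : ∫ s in t..T, g s ≤ K₁ * K₂ * Real.exp (-lam * (T - t)) * (2 / δ) := by
    rw [hg]
    rw [intervalIntegral.integral_const_mul]
    have hadd : ∫ s in t..T, (Real.exp (-δ * (s - t)) + Real.exp (-δ * (T - s)))
        = (∫ s in t..T, Real.exp (-δ * (s - t))) + ∫ s in t..T, Real.exp (-δ * (T - s)) := by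
      exact intervalIntegral.integral_add (hc1.intervalIntegrable t T)
        (hc2.intervalIntegrable t T)
    rw [hadd]
    have h1 := integral_exp_decay_left (t := t) (T := T) hδ
    have h2 := integral_exp_decay_right (t := t) (T := T) hδ
    have : (2:ℝ) / δ = 1 / δ + 1 / δ := by ring
    rw [this]
    apply mul_le_mul_of_nonneg_left (by linarith) (by positivity)
  have hgnonneg : 0 ≤ ∫ s in t..T, g s := by
    apply intervalIntegral.integral_nonneg htT
    intro s _
    rw [hg]
    positivity
  -- combine
  have hmain : eNorm (q t) ≤ ‖F T‖ + ‖∫ s in t..T, F' s‖ := by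
    have : toEuc (q t) = F T - ∫ s in t..T, F' s := by rw [hFTC, hFt]; abel
    calc eNorm (q t) = ‖toEuc (q t)‖ := (norm_toEuc _).symm
      _ = ‖F T - ∫ s in t..T, F' s‖ := by rw [this]
      _ ≤ ‖F T‖ + ‖∫ s in t..T, F' s‖ := norm_sub_le _ _
  have hexp : Real.exp (-lam₂ * (T - t)) ≤ Real.exp (-lam * (T - t)) := by
    apply Real.exp_le_exp.2
    have : lam ≤ lam₂ := min_le_right _ _
    nlinarith
  have habs : |∫ s in t..T, g s| = ∫ s in t..T, g s := abs_of_nonneg hgnonneg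
  rw [habs] at hbound
  have hfinal : eNorm (q t) ≤ K₂ * Real.exp (-lam₂ * (T - t)) * K₀ +
      K₁ * K₂ * Real.exp (-lam * (T - t)) * (2 / δ) := by
    linarith [hmain, hFT, hbound.trans hgint]
  calc eNorm (q t) ≤ K₂ * Real.exp (-lam₂ * (T - t)) * K₀ +
        K₁ * K₂ * Real.exp (-lam * (T - t)) * (2 / δ) := hfinal
    _ ≤ K₂ * Real.exp (-lam * (T - t)) * K₀ +
        K₁ * K₂ * Real.exp (-lam * (T - t)) * (2 / δ) := by
          have := mul_le_mul_of_nonneg_right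
            (mul_le_mul_of_nonneg_left hexp hK₂.le) hK₀.le
          linarith
    _ = (K₂ * K₀ + 2 * K₁ * K₂ / δ) * Real.exp (-lam * (T - t)) := by ring
end

section
/- Let T, K, λ > 0 and let φ : [0,T] → ℝ be continuous and nonnegative, satisfying φ(t) ≤ K(e^{−λt} + e^{−λ(T−t)}) + K ∫₀ᵗ e^{−λ(T + t − 2s)} φ(s) ds for all t ∈ [0,T]. Then there exists a constant K′ > 0, depending only on K and λ (and not on T), such that φ(t) ≤ K′ (e^{−λt} + e^{−λ(T−t)}) for all t ∈ [0,T]. -/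
open intervalIntegral Real

lemma my_integral_exp_mul (c : ℝ) (hc : c ≠ 0) (t : ℝ) :
    ∫ s in (0:ℝ)..t, Real.exp (c * s) = (Real.exp (c * t) - 1) / c := by
  have h : ∀ s ∈ Set.uIcc (0:ℝ) t, HasDerivAt (fun x => Real.exp (c * x) / c) (Real.exp (c * s)) s := by
    intro s _
    have h1 : HasDerivAt (fun x => c * x) c s := by simpa using (hasDerivAt_id s).const_mul c
    have := (h1.exp).div_const c
    simpa [mul_comm, mul_div_assoc, mul_div_cancel_left₀ _ hc] using this
  have := intervalIntegral.integral_eq_sub_of_hasDerivAt h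
    ((Real.continuous_exp.comp (continuous_const.mul continuous_id)).intervalIntegrable 0 t)
  simp at this
  rw [this]; ring

set_option maxHeartbeats 1000000 in
lemma gronwall_aux (K lam T : ℝ) (hK : 0 < K) (hlam : 0 < lam) (hT : 0 < T)
    (φ : ℝ → ℝ) (hc : Continuous φ) (hnn : ∀ t, 0 ≤ φ t)
    (hle : ∀ t ∈ Set.Icc (0:ℝ) T,
      φ t ≤ K * (Real.exp (-lam * t) + Real.exp (-lam * (T - t)))
        + K * ∫ s in (0:ℝ)..t, Real.exp (-lam * (T + t - 2 * s)) * φ s) :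
    ∀ t ∈ Set.Icc (0:ℝ) T,
      φ t ≤ (K + K^2 * Real.exp (K / lam) * (4 / (3 * lam)))
        * (Real.exp (-lam * t) + Real.exp (-lam * (T - t))) := by
  set F : ℝ → ℝ := fun t => ∫ s in (0:ℝ)..t, Real.exp (2 * lam * s) * φ s with hF
  have hint : Continuous fun s => Real.exp (2 * lam * s) * φ s := by fun_prop
  have hFd : ∀ t : ℝ, HasDerivAt F (Real.exp (2 * lam * t) * φ t) t := by
    intro t
    exact intervalIntegral.integral_hasDerivAt_right (hint.intervalIntegrable 0 t)
      hint.aestronglyMeasurable.stronglyMeasurableAtFilter hint.continuousAt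
  have hFc : Continuous F := by
    rw [continuous_iff_continuousAt]; exact fun t => (hFd t).continuousAt
  have hF0 : F 0 = 0 := intervalIntegral.integral_same
  have hFnn : ∀ t, 0 ≤ t → 0 ≤ F t := by
    intro t ht
    exact intervalIntegral.integral_nonneg ht fun s _ =>
      mul_nonneg (Real.exp_nonneg _) (hnn s)
  -- rewrite hypothesis
  have hle2 : ∀ t ∈ Set.Icc (0:ℝ) T,
      φ t ≤ K * (Real.exp (-lam * t) + Real.exp (-lam * (T - t)))
        + K * (Real.exp (-lam * (T + t)) * F t) := by
    intro t ht
    have := hle t ht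
    have heq : (∫ s in (0:ℝ)..t, Real.exp (-lam * (T + t - 2 * s)) * φ s)
        = Real.exp (-lam * (T + t)) * F t := by
      rw [hF, ← intervalIntegral.integral_const_mul]
      apply intervalIntegral.integral_congr
      intro s _
      simp only [← mul_assoc, ← Real.exp_add]
      ring_nf
    rwa [heq] at this
  -- integrating factor
  set μ : ℝ → ℝ := fun t => (K / lam) * Real.exp (lam * (t - T)) with hμ
  have hμd : ∀ t : ℝ, HasDerivAt μ (K * Real.exp (lam * (t - T))) t := by
    intro t
    have h1 : HasDerivAt (fun x => lam * (x - T)) lam t := by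
      simpa using ((hasDerivAt_id t).sub_const T).const_mul lam
    have := (h1.exp).const_mul (K / lam)
    refine this.congr_deriv ?_
    field_simp
  have hμnn : ∀ t, 0 ≤ μ t := fun t => by positivity
  set H : ℝ → ℝ := fun t => F t * Real.exp (-μ t) with hH
  set h : ℝ → ℝ := fun t => Real.exp (2 * lam * t) * φ t * Real.exp (-μ t)
      - K * Real.exp (lam * (t - T)) * Real.exp (-μ t) * F t with hh
  have hHd : ∀ t : ℝ, HasDerivAt H (h t) t := by
    intro t
    have := (hFd t).mul (((hμd t).neg).exp)
    refine this.congr_deriv ?_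
    simp [hh]
    ring
  have hhc : Continuous h := by
    apply Continuous.sub
    · exact hint.mul (Real.continuous_exp.comp (by fun_prop))
    · exact (Continuous.mul (by fun_prop) hFc)
  intro t ht
  obtain ⟨ht0, htT⟩ := ht
  -- FTC
  have hFTC : H t - H 0 = ∫ s in (0:ℝ)..t, h s := by
    exact (intervalIntegral.integral_eq_sub_of_hasDerivAt
      (fun s _ => hHd s) (hhc.intervalIntegrable 0 t)).symm
  have hH0 : H 0 = 0 := by simp [hH, hF0]
  -- pointwise bound on h
  set a : ℝ → ℝ := fun s => K * Real.exp (lam * s) + K * Real.exp (lam * (3 * s - T)) with ha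
  have hha : ∀ s ∈ Set.Icc (0:ℝ) t, h s ≤ a s := by
    intro s hs
    have hsIcc : s ∈ Set.Icc (0:ℝ) T := ⟨hs.1, le_trans hs.2 htT⟩
    have h1 := hle2 s hsIcc
    have hexp1 : (0:ℝ) < Real.exp (2 * lam * s) := Real.exp_pos _
    have hexpμ : Real.exp (-μ s) ≤ 1 := Real.exp_le_one_iff.mpr (neg_nonpos.mpr (hμnn s))
    have hexpμ0 : (0:ℝ) < Real.exp (-μ s) := Real.exp_pos _
    have key : Real.exp (2 * lam * s) * φ s
        ≤ K * Real.exp (lam * s) + K * Real.exp (lam * (3 * s - T))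
          + K * Real.exp (lam * (s - T)) * F s := by
      have := mul_le_mul_of_nonneg_left h1 (le_of_lt hexp1)
      calc Real.exp (2 * lam * s) * φ s
          ≤ Real.exp (2 * lam * s) * (K * (Real.exp (-lam * s) + Real.exp (-lam * (T - s)))
              + K * (Real.exp (-lam * (T + s)) * F s)) := this
        _ = K * (Real.exp (2 * lam * s) * Real.exp (-lam * s))
            + K * (Real.exp (2 * lam * s) * Real.exp (-lam * (T - s)))
            + K * (Real.exp (2 * lam * s) * Real.exp (-lam * (T + s))) * F s := by ring
        _ = K * Real.exp (lam * s) + K * Real.exp (lam * (3 * s - T))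
            + K * Real.exp (lam * (s - T)) * F s := by
            rw [← Real.exp_add, ← Real.exp_add, ← Real.exp_add]
            ring_nf
    have hFs : 0 ≤ F s := hFnn s hs.1
    have step : h s ≤ (K * Real.exp (lam * s) + K * Real.exp (lam * (3 * s - T))) * Real.exp (-μ s) := by
      simp only [hh]
      nlinarith [key, hexpμ0, mul_le_mul_of_nonneg_right key (le_of_lt hexpμ0)]
    calc h s ≤ (K * Real.exp (lam * s) + K * Real.exp (lam * (3 * s - T))) * Real.exp (-μ s) := step
      _ ≤ (K * Real.exp (lam * s) + K * Real.exp (lam * (3 * s - T))) * 1 := by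
          apply mul_le_mul_of_nonneg_left hexpμ
          positivity
      _ = a s := by rw [mul_one]
  -- integrate
  have hac : Continuous a := by fun_prop
  have hint_mono : ∫ s in (0:ℝ)..t, h s ≤ ∫ s in (0:ℝ)..t, a s := by
    apply intervalIntegral.integral_mono_on ht0 (hhc.intervalIntegrable 0 t)
      (hac.intervalIntegrable 0 t) hha
  have haval : ∫ s in (0:ℝ)..t, a s
      = K * ((Real.exp (lam * t) - 1) / lam) + K * Real.exp (-lam * T) * ((Real.exp (3 * lam * t) - 1) / (3 * lam)) := by
    have e1 : ∀ s : ℝ, a s = K * Real.exp (lam * s) + (K * Real.exp (-lam * T)) * Real.exp ((3 * lam) * s) := by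
      intro s
      simp only [ha]
      rw [mul_assoc, ← Real.exp_add]
      ring_nf
    simp only [e1]
    rw [intervalIntegral.integral_add (Continuous.intervalIntegrable (by fun_prop) 0 t)
        (Continuous.intervalIntegrable (by fun_prop) 0 t),
      intervalIntegral.integral_const_mul, intervalIntegral.integral_const_mul,
      my_integral_exp_mul lam (ne_of_gt hlam) t,
      my_integral_exp_mul (3 * lam) (by positivity) t]
  -- bound on integral of a
  set B : ℝ := K * Real.exp (lam * t) / lam
      + K * Real.exp (-lam * T) * Real.exp (3 * lam * t) / (3 * lam) with hB
  have hIa_nn : 0 ≤ ∫ s in (0:ℝ)..t, a s := by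
    apply intervalIntegral.integral_nonneg ht0
    intro s _
    simp only [ha]
    positivity
  have hIa_le : (∫ s in (0:ℝ)..t, a s) ≤ B := by
    rw [haval, hB]
    have e1 := Real.exp_pos (lam * t)
    have e2 := Real.exp_pos (3 * lam * t)
    have e3 := Real.exp_pos (-lam * T)
    have i1 : K * ((Real.exp (lam * t) - 1) / lam) ≤ K * Real.exp (lam * t) / lam := by
      rw [mul_div_assoc]
      gcongr
      linarith
    have i2 : K * Real.exp (-lam * T) * ((Real.exp (3 * lam * t) - 1) / (3 * lam))
        ≤ K * Real.exp (-lam * T) * Real.exp (3 * lam * t) / (3 * lam) := by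
      rw [mul_div_assoc]
      gcongr
      linarith
    linarith
  -- bound F t
  have hμt : μ t ≤ K / lam := by
    have h1 : Real.exp (lam * (t - T)) ≤ 1 := Real.exp_le_one_iff.mpr (by nlinarith)
    calc μ t = K / lam * Real.exp (lam * (t - T)) := rfl
      _ ≤ K / lam * 1 := by
          apply mul_le_mul_of_nonneg_left h1
          positivity
      _ = K / lam := mul_one _
  have hHt : F t * Real.exp (-μ t) ≤ ∫ s in (0:ℝ)..t, a s := by
    have h1 : F t * Real.exp (-μ t) = H t := rfl
    rw [h1, show H t = H t - H 0 by rw [hH0]; ring, hFTC]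
    exact hint_mono
  have hFt : F t ≤ Real.exp (K / lam) * B := by
    have hexpμ := Real.exp_pos (μ t)
    have h1 : F t = (F t * Real.exp (-μ t)) * Real.exp (μ t) := by
      rw [mul_assoc, ← Real.exp_add]
      simp
    calc F t = (F t * Real.exp (-μ t)) * Real.exp (μ t) := h1
      _ ≤ (∫ s in (0:ℝ)..t, a s) * Real.exp (μ t) :=
          mul_le_mul_of_nonneg_right hHt (le_of_lt hexpμ)
      _ ≤ B * Real.exp (μ t) := mul_le_mul_of_nonneg_right hIa_le (le_of_lt hexpμ)
      _ ≤ B * Real.exp (K / lam) := by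
          apply mul_le_mul_of_nonneg_left (Real.exp_le_exp.mpr hμt)
          exact le_trans hIa_nn hIa_le
      _ = Real.exp (K / lam) * B := mul_comm _ _
  -- final assembly
  have h2 := hle2 t ⟨ht0, htT⟩
  set E : ℝ := Real.exp (-lam * (T - t)) with hE
  set X : ℝ := Real.exp (-lam * (T + t)) with hX
  have hXpos : (0:ℝ) < X := Real.exp_pos _
  have hEpos : (0:ℝ) < E := Real.exp_pos _
  have hE1pos : (0:ℝ) < Real.exp (-lam * t) := Real.exp_pos _
  have id1 : X * Real.exp (lam * t) = Real.exp (-lam * T) := by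
    rw [hX, ← Real.exp_add]
    ring_nf
  have id2 : X * (Real.exp (-lam * T) * Real.exp (3 * lam * t)) = E * E := by
    rw [hX, hE, ← Real.exp_add, ← Real.exp_add, ← Real.exp_add]
    ring_nf
  have mono1 : Real.exp (-lam * T) ≤ E := Real.exp_le_exp.mpr (by nlinarith)
  have mono2 : E ≤ 1 := Real.exp_le_one_iff.mpr (by nlinarith)
  have hEE : E * E ≤ E := by nlinarith
  have step1 : K * (X * F t) ≤ K * X * (Real.exp (K / lam) * B) := by
    rw [mul_assoc]
    apply mul_le_mul_of_nonneg_left _ (le_of_lt hK)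
    exact mul_le_mul_of_nonneg_left hFt (le_of_lt hXpos)
  have step2 : K * X * (Real.exp (K / lam) * B)
      = Real.exp (K / lam) * (K ^ 2 * (X * Real.exp (lam * t)) / lam
        + K ^ 2 * (X * (Real.exp (-lam * T) * Real.exp (3 * lam * t))) / (3 * lam)) := by
    rw [hB]
    ring
  have step3 : Real.exp (K / lam) * (K ^ 2 * (X * Real.exp (lam * t)) / lam
        + K ^ 2 * (X * (Real.exp (-lam * T) * Real.exp (3 * lam * t))) / (3 * lam))
      ≤ Real.exp (K / lam) * (K ^ 2 * E / lam + K ^ 2 * E / (3 * lam)) := by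
    rw [id1, id2]
    gcongr
  have step4 : Real.exp (K / lam) * (K ^ 2 * E / lam + K ^ 2 * E / (3 * lam))
      = K ^ 2 * Real.exp (K / lam) * (4 / (3 * lam)) * E := by
    field_simp
    ring
  have key : K * (X * F t) ≤ K ^ 2 * Real.exp (K / lam) * (4 / (3 * lam)) * E := by
    calc K * (X * F t) ≤ K * X * (Real.exp (K / lam) * B) := step1
      _ = _ := step2
      _ ≤ _ := step3
      _ = _ := step4
  have hcoef : (0:ℝ) ≤ K ^ 2 * Real.exp (K / lam) * (4 / (3 * lam)) := by positivity
  nlinarith [mul_le_mul_of_nonneg_left (le_of_lt hE1pos) hcoef]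

/-- Grönwall-type estimate with exponentially decaying kernel
`e^{-λ(T + t - 2s)}`: any continuous nonnegative `φ` on `[0, T]` satisfying
`φ(t) ≤ K(e^{-λt} + e^{-λ(T-t)}) + K ∫₀ᵗ e^{-λ(T + t - 2s)} φ(s) ds` obeys
`φ(t) ≤ K'(e^{-λt} + e^{-λ(T-t)})` with `K'` depending only on `K`, `λ`. -/
theorem gronwall_kernel_estimate (K lam : ℝ) (hK : 0 < K) (hlam : 0 < lam) :
    ∃ K' > (0:ℝ), ∀ T : ℝ, 0 < T → ∀ φ : ℝ → ℝ,
      ContinuousOn φ (Set.Icc 0 T) →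
      (∀ t ∈ Set.Icc (0:ℝ) T, 0 ≤ φ t) →
      (∀ t ∈ Set.Icc (0:ℝ) T,
        φ t ≤ K * (Real.exp (-lam * t) + Real.exp (-lam * (T - t)))
          + K * ∫ s in (0:ℝ)..t, Real.exp (-lam * (T + t - 2 * s)) * φ s) →
      ∀ t ∈ Set.Icc (0:ℝ) T,
        φ t ≤ K' * (Real.exp (-lam * t) + Real.exp (-lam * (T - t))) := by
  refine ⟨K + K ^ 2 * Real.exp (K / lam) * (4 / (3 * lam)), by positivity, ?_⟩
  intro T hT φ hφc hφnn hφle t ht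
  set ψ : ℝ → ℝ := fun s => φ (max 0 (min s T)) with hψ
  have hproj : ∀ s : ℝ, max 0 (min s T) ∈ Set.Icc (0:ℝ) T := by
    intro s
    exact ⟨le_max_left _ _, max_le (le_of_lt hT) (min_le_right _ _)⟩
  have hψc : Continuous ψ :=
    hφc.comp_continuous (by fun_prop) hproj
  have hagree : ∀ s ∈ Set.Icc (0:ℝ) T, ψ s = φ s := by
    intro s hs
    simp [hψ, min_eq_left hs.2, max_eq_right hs.1]
  have hψnn : ∀ s, 0 ≤ ψ s := fun s => hφnn _ (hproj s)
  have hψle : ∀ u ∈ Set.Icc (0:ℝ) T,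
      ψ u ≤ K * (Real.exp (-lam * u) + Real.exp (-lam * (T - u)))
        + K * ∫ s in (0:ℝ)..u, Real.exp (-lam * (T + u - 2 * s)) * ψ s := by
    intro u hu
    rw [hagree u hu]
    have heqint : (∫ s in (0:ℝ)..u, Real.exp (-lam * (T + u - 2 * s)) * ψ s)
        = ∫ s in (0:ℝ)..u, Real.exp (-lam * (T + u - 2 * s)) * φ s := by
      apply intervalIntegral.integral_congr
      intro s hs
      rw [Set.uIcc_of_le hu.1] at hs
      simp only []
      rw [hagree s ⟨hs.1, le_trans hs.2 hu.2⟩]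
    rw [heqint]
    exact hφle u hu
  have := gronwall_aux K lam T hK hlam hT ψ hψc hψnn hψle t ht
  rwa [hagree t ht] at this
end

section
/- Let T, K, K₁, β, λ > 0 and define g(t) = K₁(−β/2 + K e^{−λ(T−t)}) for t ∈ [0,T]. Then: (i) for all 0 ≤ s ≤ t ≤ T, exp(∫ₛᵗ g(r) dr) ≤ exp(K₁K/λ) · exp(−K₁β(t − s)/2); and (ii) there exist constants K′ > 0 and λ′ > 0, depending only on K, K₁, β, λ (and not on T), such that ∫₀ᵗ exp(∫ₛᵗ g(r) dr) · K(e^{−λs} + e^{−λ(T−s)}) ds ≤ K′(e^{−λ′t} + e^{−λ′(T−t)}) for all t ∈ [0,T]. -/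
set_option maxHeartbeats 1000000

/-- The function `g(t) = K₁(-β/2 + K e^{-λ(T-t)})`. -/
noncomputable def gFun (K K₁ β lam T t : ℝ) : ℝ :=
  K₁ * (-β / 2 + K * Real.exp (-lam * (T - t)))

lemma gFun_integral (K K₁ β lam T : ℝ) (hlam : lam ≠ 0) (s t : ℝ) :
    ∫ r in s..t, gFun K K₁ β lam T r
      = K₁ * (-β / 2) * (t - s)
        + K₁ * K / lam * (Real.exp (-lam * (T - t)) - Real.exp (-lam * (T - s))) := by
  have h : ∀ x ∈ Set.uIcc s t,
      HasDerivAt (fun r => K₁ * (-β / 2) * r + K₁ * K / lam * Real.exp (-lam * (T - r)))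
        (gFun K K₁ β lam T x) x := by
    intro x _
    have h1 : HasDerivAt (fun r : ℝ => -lam * (T - r)) (-lam * (-1)) x :=
      ((hasDerivAt_id x).const_sub T).const_mul (-lam)
    have h2 := (h1.exp).const_mul (K₁ * K / lam)
    have h3 : HasDerivAt (fun r : ℝ => K₁ * (-β / 2) * r) (K₁ * (-β / 2)) x := by
      simpa using (hasDerivAt_id x).const_mul (K₁ * (-β / 2))
    have h4 := h3.add h2
    refine h4.congr_deriv ?_
    unfold gFun
    field_simp
  rw [intervalIntegral.integral_eq_sub_of_hasDerivAt h
    (Continuous.intervalIntegrable (by unfold gFun; continuity) s t)]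
  ring

lemma exp_decay_integral (a t : ℝ) (ha : a ≠ 0) :
    ∫ s in (0:ℝ)..t, Real.exp (-(a * (t - s))) = (1 - Real.exp (-(a * t))) / a := by
  have h : ∀ x ∈ Set.uIcc (0:ℝ) t,
      HasDerivAt (fun s : ℝ => Real.exp (-(a * (t - s))) / a)
        (Real.exp (-(a * (t - x)))) x := by
    intro x _
    have h1 : HasDerivAt (fun s : ℝ => -(a * (t - s))) (-(a * (-1))) x :=
      (((hasDerivAt_id x).const_sub t).const_mul a).neg
    have h2 := (h1.exp).div_const a
    refine h2.congr_deriv ?_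
    field_simp
  rw [intervalIntegral.integral_eq_sub_of_hasDerivAt h
    (Continuous.intervalIntegrable (by continuity) 0 t)]
  simp
  ring

/-- (i) `exp(∫ₛᵗ g) ≤ exp(K₁K/λ)·exp(-K₁β(t-s)/2)` for
`0 ≤ s ≤ t ≤ T`; (ii) there are `K', λ' > 0` independent of `T` such that
`∫₀ᵗ exp(∫ₛᵗ g)·K(e^{-λs} + e^{-λ(T-s)}) ds ≤ K'(e^{-λ't} + e^{-λ'(T-t)})` on
`[0, T]`. -/
theorem gFun_integral_estimates (K K₁ β lam : ℝ)
    (hK : 0 < K) (hK₁ : 0 < K₁) (hβ : 0 < β) (hlam : 0 < lam) :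
    (∀ T : ℝ, 0 < T → ∀ s t : ℝ, 0 ≤ s → s ≤ t → t ≤ T →
      Real.exp (∫ r in s..t, gFun K K₁ β lam T r)
        ≤ Real.exp (K₁ * K / lam) * Real.exp (-(K₁ * β * (t - s) / 2))) ∧
    ∃ K' > (0:ℝ), ∃ lam' > (0:ℝ), ∀ T : ℝ, 0 < T → ∀ t ∈ Set.Icc (0:ℝ) T,
      (∫ s in (0:ℝ)..t, Real.exp (∫ r in s..t, gFun K K₁ β lam T r)
          * (K * (Real.exp (-lam * s) + Real.exp (-lam * (T - s)))))
        ≤ K' * (Real.exp (-lam' * t) + Real.exp (-lam' * (T - t))) := by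
  have hKl : 0 < K₁ * K / lam := by positivity
  constructor
  · intro T hT s t hs hst htT
    rw [gFun_integral K K₁ β lam T hlam.ne' s t, ← Real.exp_add]
    apply Real.exp_le_exp.mpr
    have e1 : Real.exp (-lam * (T - t)) ≤ 1 := by
      apply Real.exp_le_one_iff.mpr; nlinarith
    have e2 : 0 ≤ Real.exp (-lam * (T - s)) := (Real.exp_pos _).le
    nlinarith
  · set a := K₁ * β / 2 with ha
    have ha0 : 0 < a := by positivity
    set m := min a lam with hm
    have hm0 : 0 < m := lt_min ha0 hlam
    have hma : m ≤ a := min_le_left _ _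
    have hml : m ≤ lam := min_le_right _ _
    set C := Real.exp (K₁ * K / lam) with hC
    have hC0 : 0 < C := Real.exp_pos _
    refine ⟨C * K * (2 / m + 1 / a), by positivity, m / 2, by positivity, ?_⟩
    intro T hT t ht
    obtain ⟨ht0, htT⟩ := ht
    have hcong : Set.EqOn
        (fun s => Real.exp (∫ r in s..t, gFun K K₁ β lam T r)
          * (K * (Real.exp (-lam * s) + Real.exp (-lam * (T - s)))))
        (fun s => Real.exp (K₁ * (-β / 2) * (t - s)
            + K₁ * K / lam * (Real.exp (-lam * (T - t)) - Real.exp (-lam * (T - s))))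
          * (K * (Real.exp (-lam * s) + Real.exp (-lam * (T - s)))))
        (Set.uIcc 0 t) := by
      intro s _
      simp only
      rw [gFun_integral K K₁ β lam T hlam.ne' s t]
    rw [intervalIntegral.integral_congr hcong]
    have hbound : (∫ s in (0:ℝ)..t,
        Real.exp (K₁ * (-β / 2) * (t - s)
          + K₁ * K / lam * (Real.exp (-lam * (T - t)) - Real.exp (-lam * (T - s))))
          * (K * (Real.exp (-lam * s) + Real.exp (-lam * (T - s)))))
        ≤ ∫ s in (0:ℝ)..t,
            (C * K * Real.exp (-(m * t))
              + C * K * Real.exp (-lam * (T - t)) * Real.exp (-(a * (t - s)))) := by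
      apply intervalIntegral.integral_mono_on ht0
      · exact Continuous.intervalIntegrable (by continuity) 0 t
      · exact Continuous.intervalIntegrable (by continuity) 0 t
      · intro s hs
        obtain ⟨hs0, hst⟩ := hs
        have key : Real.exp (K₁ * (-β / 2) * (t - s)
            + K₁ * K / lam * (Real.exp (-lam * (T - t)) - Real.exp (-lam * (T - s))))
            ≤ C * Real.exp (-(a * (t - s))) := by
          rw [hC, ← Real.exp_add]
          apply Real.exp_le_exp.mpr
          have e1 : Real.exp (-lam * (T - t)) ≤ 1 := by
            apply Real.exp_le_one_iff.mpr; nlinarith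
          have e2 : 0 ≤ Real.exp (-lam * (T - s)) := (Real.exp_pos _).le
          nlinarith
        have hmul0 : 0 ≤ K * (Real.exp (-lam * s) + Real.exp (-lam * (T - s))) := by
          positivity
        have step1 : Real.exp (K₁ * (-β / 2) * (t - s)
            + K₁ * K / lam * (Real.exp (-lam * (T - t)) - Real.exp (-lam * (T - s))))
            * (K * (Real.exp (-lam * s) + Real.exp (-lam * (T - s))))
            ≤ C * Real.exp (-(a * (t - s)))
              * (K * (Real.exp (-lam * s) + Real.exp (-lam * (T - s)))) :=
          mul_le_mul_of_nonneg_right key hmul0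
        refine step1.trans ?_
        have b1 : Real.exp (-(a * (t - s))) * Real.exp (-lam * s) ≤ Real.exp (-(m * t)) := by
          rw [← Real.exp_add]
          apply Real.exp_le_exp.mpr
          nlinarith [mul_le_mul_of_nonneg_right hma (sub_nonneg.mpr hst),
            mul_le_mul_of_nonneg_right hml hs0]
        have b2 : Real.exp (-(a * (t - s))) * Real.exp (-lam * (T - s))
            ≤ Real.exp (-lam * (T - t)) * Real.exp (-(a * (t - s))) := by
          rw [← Real.exp_add, ← Real.exp_add]
          apply Real.exp_le_exp.mpr
          nlinarith [mul_le_mul_of_nonneg_right hlam.le (sub_nonneg.mpr hst)]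
        have hCK : (0:ℝ) ≤ C * K := by positivity
        nlinarith [mul_le_mul_of_nonneg_left b1 hCK, mul_le_mul_of_nonneg_left b2 hCK]
    refine hbound.trans ?_
    have hint1 : IntervalIntegrable (fun _ : ℝ => C * K * Real.exp (-(m * t))) MeasureTheory.volume 0 t :=
      intervalIntegrable_const
    have hint2 : IntervalIntegrable
        (fun s : ℝ => C * K * Real.exp (-lam * (T - t)) * Real.exp (-(a * (t - s))))
        MeasureTheory.volume 0 t :=
      Continuous.intervalIntegrable (by continuity) 0 t
    rw [intervalIntegral.integral_add hint1 hint2, intervalIntegral.integral_const,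
      intervalIntegral.integral_const_mul, exp_decay_integral a t ha0.ne']
    simp only [smul_eq_mul, sub_zero]
    -- now pure arithmetic
    have hexp1 : 0 ≤ Real.exp (-(a * t)) := (Real.exp_pos _).le
    have hle1 : Real.exp (-(a * t)) ≤ 1 := by
      apply Real.exp_le_one_iff.mpr; nlinarith
    have h3 : 0 ≤ (1 - Real.exp (-(a * t))) / a := by
      apply div_nonneg _ ha0.le; linarith
    have h3' : (1 - Real.exp (-(a * t))) / a ≤ 1 / a := by
      gcongr
      linarith
    have hE : 0 < Real.exp (-(m / 2) * t) := Real.exp_pos _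
    have hPE : Real.exp (m / 2 * t) * Real.exp (-(m / 2) * t) = 1 := by
      rw [← Real.exp_add, show m / 2 * t + -(m / 2) * t = 0 by ring, Real.exp_zero]
    have hsq : Real.exp (-(m * t)) = Real.exp (-(m / 2) * t) * Real.exp (-(m / 2) * t) := by
      rw [← Real.exp_add]; ring_nf
    have hx := Real.add_one_le_exp (m / 2 * t)
    have h4 : t * Real.exp (-(m / 2) * t) ≤ 2 / m := by
      have h5 := mul_le_mul_of_nonneg_right hx hE.le
      rw [le_div_iff₀ hm0]
      nlinarith [hPE, hE]
    have f1 : t * Real.exp (-(m * t)) ≤ 2 / m * Real.exp (-(m / 2) * t) := by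
      rw [hsq]
      nlinarith [mul_le_mul_of_nonneg_right h4 hE.le]
    have f2 : Real.exp (-lam * (T - t)) ≤ Real.exp (-(m / 2) * (T - t)) := by
      apply Real.exp_le_exp.mpr; nlinarith
    have f3 : Real.exp (-lam * (T - t)) * ((1 - Real.exp (-(a * t))) / a)
        ≤ Real.exp (-(m / 2) * (T - t)) * (1 / a) :=
      mul_le_mul f2 h3' h3 (Real.exp_pos _).le
    have hCK : (0:ℝ) < C * K := by positivity
    nlinarith [mul_le_mul_of_nonneg_left f1 hCK.le, mul_le_mul_of_nonneg_left f3 hCK.le,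
      mul_pos (mul_pos hCK (by positivity : (0:ℝ) < 2 / m)) (Real.exp_pos (-(m / 2) * (T - t))),
      mul_pos (mul_pos hCK (by positivity : (0:ℝ) < 1 / a)) (Real.exp_pos (-(m / 2) * t))]
end

section
/- Let T, K, K₁, β, λ > 0, define g(t) = K₁(−β/2 + K e^{−λ(T−t)}) for t ∈ [0,T], and let V : [0,T] → ℝ be differentiable with V(t) ≥ 0 and V′(t) ≤ g(t) V(t) + K(e^{−λt} + e^{−λ(T−t)}) for all t ∈ [0,T]. Then V(t) ≤ V(0) exp(∫₀ᵗ g(r) dr) + ∫₀ᵗ exp(∫ₛᵗ g(r) dr) · K(e^{−λs} + e^{−λ(T−s)}) ds for all t ∈ [0,T]; consequently there exist constants K′ > 0 and λ′ > 0, depending only on V(0), K, K₁, β, λ (and not on T), such that V(t) ≤ K′(e^{−λ′t} + e^{−λ′(T−t)}) for all t ∈ [0,T]. -/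
private lemma gFun_continuous (K K₁ β lam T : ℝ) : Continuous (gFun K K₁ β lam T) := by
  unfold gFun; fun_prop

/-- antiderivative of gFun -/
private lemma hasDerivAt_phi (K K₁ β lam T : ℝ) (hlam : lam ≠ 0) (r : ℝ) :
    HasDerivAt (fun r => K₁ * (-β / 2 * r + K / lam * Real.exp (-lam * (T - r))))
      (gFun K K₁ β lam T r) r := by
  have h1 : HasDerivAt (fun r : ℝ => -lam * (T - r)) lam r := by
    simpa using ((hasDerivAt_id r).const_sub T).const_mul (-lam)
  have h2 : HasDerivAt (fun r : ℝ => Real.exp (-lam * (T - r)))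
      (Real.exp (-lam * (T - r)) * lam) r := h1.exp
  have h3 : HasDerivAt (fun r : ℝ => -β / 2 * r + K / lam * Real.exp (-lam * (T - r)))
      (-β / 2 + K / lam * (Real.exp (-lam * (T - r)) * lam)) r := by
    have := ((hasDerivAt_id' r).const_mul (-β / 2)).add (h2.const_mul (K / lam))
    simp only [mul_one] at this
    exact this
  have h4 := h3.const_mul K₁
  refine h4.congr_deriv ?_
  unfold gFun
  rw [mul_comm (Real.exp _) lam, ← mul_assoc, div_mul_cancel₀ K hlam]

private lemma integral_gFun (K K₁ β lam T : ℝ) (hlam : lam ≠ 0) (s t : ℝ) :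
    (∫ r in s..t, gFun K K₁ β lam T r)
      = K₁ * (-β / 2 * (t - s)
          + K / lam * (Real.exp (-lam * (T - t)) - Real.exp (-lam * (T - s)))) := by
  rw [intervalIntegral.integral_eq_sub_of_hasDerivAt
    (fun r _ => hasDerivAt_phi K K₁ β lam T hlam r)
    ((gFun_continuous K K₁ β lam T).intervalIntegrable s t)]
  ring

/-- `∫₀ᵗ e^{-a(t-s)} ds ≤ 1/a` for `a > 0`, `t ≥ 0`. -/
private lemma integral_exp_decay (a t : ℝ) (ha : 0 < a) (ht : 0 ≤ t) :
    (∫ s in (0:ℝ)..t, Real.exp (-a * (t - s))) ≤ 1 / a := by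
  have hderiv : ∀ s ∈ Set.uIcc (0:ℝ) t,
      HasDerivAt (fun s => Real.exp (-a * (t - s)) / a) (Real.exp (-a * (t - s))) s := by
    intro s _
    have h1 : HasDerivAt (fun s : ℝ => -a * (t - s)) a s := by
      simpa using ((hasDerivAt_id s).const_sub t).const_mul (-a)
    have h2 := (h1.exp).div_const a
    refine h2.congr_deriv ?_
    exact mul_div_cancel_right₀ _ ha.ne'
  have hci : IntervalIntegrable (fun s => Real.exp (-a * (t - s))) MeasureTheory.volume 0 t :=
    (by fun_prop : Continuous fun s => Real.exp (-a * (t - s))).intervalIntegrable 0 t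
  rw [intervalIntegral.integral_eq_sub_of_hasDerivAt hderiv hci]
  have h1 : 0 < Real.exp (-a * (t - 0)) := Real.exp_pos _
  have h2 : Real.exp (-a * (t - t)) = 1 := by norm_num
  rw [h2]
  have : Real.exp (-a * (t - 0)) / a > 0 := by positivity
  linarith

set_option maxHeartbeats 1000000 in
/-- comparison/Grönwall step.  If `V ≥ 0` is differentiable on `[0, T]`
with `V' ≤ g V + K(e^{-λt} + e^{-λ(T-t)})`, then
`V(t) ≤ V(0) exp(∫₀ᵗ g) + ∫₀ᵗ exp(∫ₛᵗ g)·K(e^{-λs} + e^{-λ(T-s)}) ds`; consequently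
`V(t) ≤ K'(e^{-λ't} + e^{-λ'(T-t)})` with `K', λ'` depending only on `V(0)`, `K`, `K₁`,
`β`, `λ` and not on `T`. -/
theorem gronwall_comparison (K K₁ β lam v₀ : ℝ)
    (hK : 0 < K) (hK₁ : 0 < K₁) (hβ : 0 < β) (hlam : 0 < lam) :
    ∃ K' > (0:ℝ), ∃ lam' > (0:ℝ), ∀ T : ℝ, 0 < T → ∀ V V' : ℝ → ℝ,
      V 0 = v₀ →
      (∀ t ∈ Set.Icc (0:ℝ) T, HasDerivAt V (V' t) t) →
      (∀ t ∈ Set.Icc (0:ℝ) T, 0 ≤ V t) →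
      (∀ t ∈ Set.Icc (0:ℝ) T,
        V' t ≤ gFun K K₁ β lam T t * V t
          + K * (Real.exp (-lam * t) + Real.exp (-lam * (T - t)))) →
      (∀ t ∈ Set.Icc (0:ℝ) T,
        V t ≤ V 0 * Real.exp (∫ r in (0:ℝ)..t, gFun K K₁ β lam T r)
          + ∫ s in (0:ℝ)..t, Real.exp (∫ r in s..t, gFun K K₁ β lam T r)
              * (K * (Real.exp (-lam * s) + Real.exp (-lam * (T - s))))) ∧
      (∀ t ∈ Set.Icc (0:ℝ) T,
        V t ≤ K' * (Real.exp (-lam' * t) + Real.exp (-lam' * (T - t)))) := by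
  set μ := K₁ * β / 2 with hμdef
  have hμ : 0 < μ := by positivity
  set ν := min μ lam / 2 with hνdef
  have hν : 0 < ν := by positivity
  have hνμ : 2 * ν ≤ μ := by
    rw [hνdef]; have := min_le_left μ lam; linarith
  have hνlam : 2 * ν ≤ lam := by
    rw [hνdef]; have := min_le_right μ lam; linarith
  set C := Real.exp (K₁ * K / lam) with hCdef
  have hC : 0 < C := Real.exp_pos _
  refine ⟨C * (|v₀| + K / ν + K / μ) + 1, by positivity, ν, hν, ?_⟩
  intro T hT V V' hV0 hderiv hpos hineq
  set g := gFun K K₁ β lam T with hgdef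
  have hgcont : Continuous g := gFun_continuous K K₁ β lam T
  set h := fun s => K * (Real.exp (-lam * s) + Real.exp (-lam * (T - s))) with hhdef
  have hhcont : Continuous h := by unfold h; fun_prop
  have hhpos : ∀ s, 0 < h s := fun s => by
    unfold h; positivity
  set G := fun t => ∫ r in (0:ℝ)..t, g r with hGdef
  have hG : ∀ t, HasDerivAt G (g t) t := fun t =>
    intervalIntegral.integral_hasDerivAt_right (hgcont.intervalIntegrable _ _)
      (hgcont.stronglyMeasurableAtFilter _ _) hgcont.continuousAt
  have hGcont : Continuous G := continuous_iff_continuousAt.mpr fun t => (hG t).continuousAt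
  have hEh : Continuous fun s => Real.exp (-(G s)) * h s := by fun_prop
  set F := fun t => Real.exp (-(G t)) * V t - ∫ s in (0:ℝ)..t, Real.exp (-(G s)) * h s
    with hFdef
  have hFd : ∀ t ∈ Set.Icc (0:ℝ) T,
      HasDerivAt F (Real.exp (-(G t)) * (V' t - g t * V t - h t)) t := by
    intro t ht
    have h1 : HasDerivAt (fun t => Real.exp (-(G t))) (Real.exp (-(G t)) * (-(g t))) t :=
      (hG t).neg.exp
    have h2 := h1.mul (hderiv t ht)
    have h3 : HasDerivAt (fun t => ∫ s in (0:ℝ)..t, Real.exp (-(G s)) * h s)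
        (Real.exp (-(G t)) * h t) t :=
      intervalIntegral.integral_hasDerivAt_right (hEh.intervalIntegrable _ _)
        (hEh.stronglyMeasurableAtFilter _ _) hEh.continuousAt
    have h4 := h2.sub h3
    refine h4.congr_deriv ?_
    ring
  have hFcont : ContinuousOn F (Set.Icc 0 T) :=
    fun t ht => ((hFd t ht).continuousAt).continuousWithinAt
  have hFanti : AntitoneOn F (Set.Icc 0 T) := by
    apply antitoneOn_of_deriv_nonpos (convex_Icc 0 T) hFcont
    · intro t ht
      rw [interior_Icc] at ht
      exact (hFd t (Set.mem_Icc_of_Ioo ht)).differentiableAt.differentiableWithinAt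
    · intro t ht
      rw [interior_Icc] at ht
      have ht' := Set.mem_Icc_of_Ioo ht
      rw [(hFd t ht').deriv]
      have h5 := hineq t ht'
      have hE : 0 ≤ Real.exp (-(G t)) := (Real.exp_pos _).le
      have h6 : V' t - g t * V t - h t ≤ 0 := by
        have hht : h t = K * (Real.exp (-lam * t) + Real.exp (-lam * (T - t))) := rfl
        have hgt : g t = gFun K K₁ β lam T t := rfl
        rw [hht, hgt]; linarith
      exact mul_nonpos_of_nonneg_of_nonpos hE h6
  have hG0 : G 0 = 0 := intervalIntegral.integral_same
  have hF0 : F 0 = V 0 := by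
    simp [hFdef, hG0]
  -- the key pointwise identity
  have key : ∀ t, ∀ s, Real.exp (G t) * (Real.exp (-(G s)) * h s)
      = Real.exp (∫ r in s..t, g r) * h s := by
    intro t s
    have hsub : G t - G s = ∫ r in s..t, g r :=
      intervalIntegral.integral_interval_sub_left (hgcont.intervalIntegrable 0 t)
        (hgcont.intervalIntegrable 0 s)
    rw [← hsub, ← mul_assoc, ← Real.exp_add]
    ring_nf
  have part1 : ∀ t ∈ Set.Icc (0:ℝ) T,
      V t ≤ V 0 * Real.exp (G t) + ∫ s in (0:ℝ)..t, Real.exp (∫ r in s..t, g r) * h s := by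
    intro t ht
    have hFle : F t ≤ F 0 := hFanti (Set.left_mem_Icc.mpr hT.le) ht ht.1
    rw [hF0] at hFle
    have h1 : Real.exp (-(G t)) * V t ≤ V 0 + ∫ s in (0:ℝ)..t, Real.exp (-(G s)) * h s := by
      have := hFle
      simp only [hFdef] at this
      linarith
    calc V t = Real.exp (G t) * (Real.exp (-(G t)) * V t) := by
          rw [← mul_assoc, ← Real.exp_add]; simp
      _ ≤ Real.exp (G t) * (V 0 + ∫ s in (0:ℝ)..t, Real.exp (-(G s)) * h s) :=
          mul_le_mul_of_nonneg_left h1 (Real.exp_pos _).le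
      _ = V 0 * Real.exp (G t)
            + ∫ s in (0:ℝ)..t, Real.exp (∫ r in s..t, g r) * h s := by
          rw [mul_add, ← intervalIntegral.integral_const_mul]
          congr 1
          · ring
          · exact intervalIntegral.integral_congr fun s _ => key t s
  refine ⟨part1, ?_⟩
  -- the exponential bound on exp(∫ₛᵗ g)
  have hexp_bound : ∀ s t : ℝ, 0 ≤ s → s ≤ t → t ≤ T →
      Real.exp (∫ r in s..t, g r) ≤ C * Real.exp (-μ * (t - s)) := by
    intro s t hs hst htT
    rw [hgdef, integral_gFun K K₁ β lam T hlam.ne' s t, hCdef, ← Real.exp_add]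
    apply Real.exp_le_exp.mpr
    have h1 : Real.exp (-lam * (T - t)) ≤ 1 := Real.exp_le_one_iff.mpr (by nlinarith)
    have h2 : 0 < Real.exp (-lam * (T - s)) := Real.exp_pos _
    have h3 : 0 < K / lam := by positivity
    rw [hμdef]
    have hstep : K₁ * (K / lam) * (Real.exp (-lam * (T - t)) - Real.exp (-lam * (T - s)))
        ≤ K₁ * (K / lam) := by
      have := mul_le_mul_of_nonneg_left (by linarith :
        Real.exp (-lam * (T - t)) - Real.exp (-lam * (T - s)) ≤ 1)
        (by positivity : (0:ℝ) ≤ K₁ * (K / lam))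
      linarith
    linear_combination hstep
  intro t ht
  obtain ⟨ht0, htT⟩ := ht
  have hv0 : 0 ≤ V 0 := hpos 0 (Set.left_mem_Icc.mpr hT.le)
  have hv0abs : V 0 ≤ |v₀| := by rw [hV0]; exact le_abs_self v₀
  -- first term bound
  have hterm1 : V 0 * Real.exp (G t) ≤ |v₀| * (C * Real.exp (-ν * t)) := by
    have hb : Real.exp (G t) ≤ C * Real.exp (-μ * t) := by
      simpa using hexp_bound 0 t le_rfl ht0 htT
    have hmn : Real.exp (-μ * t) ≤ Real.exp (-ν * t) :=
      Real.exp_le_exp.mpr (by nlinarith)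
    have hb' : Real.exp (G t) ≤ C * Real.exp (-ν * t) :=
      hb.trans (mul_le_mul_of_nonneg_left hmn hC.le)
    exact mul_le_mul hv0abs hb' (Real.exp_pos _).le (abs_nonneg v₀)
  -- integrand bound
  have hintbd : ∀ s ∈ Set.Icc (0:ℝ) t,
      Real.exp (∫ r in s..t, g r) * h s
        ≤ C * K * (Real.exp (-ν * t) * Real.exp (-ν * (t - s))
            + Real.exp (-ν * (T - t)) * Real.exp (-μ * (t - s))) := by
    intro s hs
    obtain ⟨hs0, hst⟩ := hs
    have hb := hexp_bound s t hs0 hst htT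
    have e1 : Real.exp (-μ * (t - s)) * Real.exp (-lam * s)
        ≤ Real.exp (-ν * t) * Real.exp (-ν * (t - s)) := by
      rw [← Real.exp_add, ← Real.exp_add]
      apply Real.exp_le_exp.mpr
      nlinarith
    have e2 : Real.exp (-μ * (t - s)) * Real.exp (-lam * (T - s))
        ≤ Real.exp (-ν * (T - t)) * Real.exp (-μ * (t - s)) := by
      have : Real.exp (-lam * (T - s)) ≤ Real.exp (-ν * (T - t)) := by
        apply Real.exp_le_exp.mpr
        nlinarith
      nlinarith [Real.exp_pos (-μ * (t - s)), Real.exp_pos (-lam * (T - s))]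
    have hhle : h s = K * (Real.exp (-lam * s) + Real.exp (-lam * (T - s))) := rfl
    have hEpos : 0 < Real.exp (∫ r in s..t, g r) := Real.exp_pos _
    have hEpos2 : 0 < Real.exp (-μ * (t - s)) := Real.exp_pos _
    calc Real.exp (∫ r in s..t, g r) * h s
        ≤ (C * Real.exp (-μ * (t - s))) * h s :=
          mul_le_mul_of_nonneg_right hb (hhpos s).le
      _ = C * K * (Real.exp (-μ * (t - s)) * Real.exp (-lam * s)
            + Real.exp (-μ * (t - s)) * Real.exp (-lam * (T - s))) := by
          rw [hhle]; ring
      _ ≤ C * K * (Real.exp (-ν * t) * Real.exp (-ν * (t - s))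
            + Real.exp (-ν * (T - t)) * Real.exp (-μ * (t - s))) := by
          apply mul_le_mul_of_nonneg_left _ (by positivity)
          linarith
  -- bound the integral
  have hint : (∫ s in (0:ℝ)..t, Real.exp (∫ r in s..t, g r) * h s)
      ≤ C * K * (Real.exp (-ν * t) * (1 / ν) + Real.exp (-ν * (T - t)) * (1 / μ)) := by
    have hcont1 : Continuous fun s => Real.exp (∫ r in s..t, g r) * h s := by
      have : Continuous fun s => (∫ r in s..t, g r) := by
        have : ∀ s, (∫ r in s..t, g r) = G t - G s := fun s =>
          (intervalIntegral.integral_interval_sub_left (hgcont.intervalIntegrable 0 t)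
            (hgcont.intervalIntegrable 0 s)).symm
        simp only [this]
        fun_prop
      fun_prop
    have hcont2 : Continuous fun s => C * K * (Real.exp (-ν * t) * Real.exp (-ν * (t - s))
        + Real.exp (-ν * (T - t)) * Real.exp (-μ * (t - s))) := by fun_prop
    have ii1 : IntervalIntegrable (fun s => Real.exp (∫ r in s..t, g r) * h s)
        MeasureTheory.volume 0 t := hcont1.intervalIntegrable 0 t
    have ii2 : IntervalIntegrable (fun s => C * K * (Real.exp (-ν * t) * Real.exp (-ν * (t - s))
        + Real.exp (-ν * (T - t)) * Real.exp (-μ * (t - s)))) MeasureTheory.volume 0 t :=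
      hcont2.intervalIntegrable 0 t
    have step1 := intervalIntegral.integral_mono_on ht0 ii1 ii2 hintbd
    refine step1.trans ?_
    have i1 := integral_exp_decay ν t hν ht0
    have i2 := integral_exp_decay μ t hμ ht0
    have expand : (∫ s in (0:ℝ)..t, C * K * (Real.exp (-ν * t) * Real.exp (-ν * (t - s))
        + Real.exp (-ν * (T - t)) * Real.exp (-μ * (t - s))))
        = C * K * (Real.exp (-ν * t) * (∫ s in (0:ℝ)..t, Real.exp (-ν * (t - s)))
          + Real.exp (-ν * (T - t)) * (∫ s in (0:ℝ)..t, Real.exp (-μ * (t - s)))) := by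
      have c1 : IntervalIntegrable (fun s => Real.exp (-ν * t) * Real.exp (-ν * (t - s)))
          MeasureTheory.volume 0 t :=
        (by fun_prop : Continuous fun s => Real.exp (-ν * t) * Real.exp (-ν * (t - s))).intervalIntegrable 0 t
      have c2 : IntervalIntegrable (fun s => Real.exp (-ν * (T - t)) * Real.exp (-μ * (t - s)))
          MeasureTheory.volume 0 t :=
        (by fun_prop : Continuous fun s => Real.exp (-ν * (T - t)) * Real.exp (-μ * (t - s))).intervalIntegrable 0 t
      rw [show (fun s => C * K * (Real.exp (-ν * t) * Real.exp (-ν * (t - s))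
          + Real.exp (-ν * (T - t)) * Real.exp (-μ * (t - s))))
          = fun s => C * K * ((fun s => Real.exp (-ν * t) * Real.exp (-ν * (t - s))) s
            + (fun s => Real.exp (-ν * (T - t)) * Real.exp (-μ * (t - s))) s) from rfl,
        intervalIntegral.integral_const_mul, intervalIntegral.integral_add c1 c2,
        intervalIntegral.integral_const_mul, intervalIntegral.integral_const_mul]
    rw [expand]
    have i1' : Real.exp (-ν * t) * (∫ s in (0:ℝ)..t, Real.exp (-ν * (t - s)))
        ≤ Real.exp (-ν * t) * (1 / ν) :=
      mul_le_mul_of_nonneg_left i1 (Real.exp_pos _).le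
    have i2' : Real.exp (-ν * (T - t)) * (∫ s in (0:ℝ)..t, Real.exp (-μ * (t - s)))
        ≤ Real.exp (-ν * (T - t)) * (1 / μ) :=
      mul_le_mul_of_nonneg_left i2 (Real.exp_pos _).le
    have hCK : (0:ℝ) ≤ C * K := by positivity
    exact mul_le_mul_of_nonneg_left (add_le_add i1' i2') hCK
  -- assembling
  have hfinal := (part1 t ⟨ht0, htT⟩).trans (add_le_add hterm1 hint)
  have hA : 0 < Real.exp (-ν * t) := Real.exp_pos _
  have hB : 0 < Real.exp (-ν * (T - t)) := Real.exp_pos _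
  have habs : 0 ≤ |v₀| := abs_nonneg v₀
  have h1ν : 0 < 1 / ν := by positivity
  have h1μ : 0 < 1 / μ := by positivity
  have main : ∀ iν iμ A B : ℝ, 0 ≤ iν → 0 ≤ iμ → 0 < A → 0 < B →
      |v₀| * (C * A) + C * K * (A * iν + B * iμ)
        ≤ (C * (|v₀| + K * iν + K * iμ) + 1) * (A + B) := by
    intro iν iμ A B hiν hiμ hA hB
    nlinarith [mul_nonneg (mul_nonneg hC.le habs) hB.le,
      mul_nonneg (mul_nonneg (mul_nonneg hC.le hK.le) hiν) hB.le,
      mul_nonneg (mul_nonneg (mul_nonneg hC.le hK.le) hiμ) hA.le]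
  calc V t ≤ |v₀| * (C * Real.exp (-ν * t))
        + C * K * (Real.exp (-ν * t) * (1 / ν) + Real.exp (-ν * (T - t)) * (1 / μ)) := hfinal
    _ ≤ (C * (|v₀| + K * (1 / ν) + K * (1 / μ)) + 1)
        * (Real.exp (-ν * t) + Real.exp (-ν * (T - t))) :=
      main (1 / ν) (1 / μ) _ _ (by positivity) (by positivity) hA hB
    _ = (C * (|v₀| + K / ν + K / μ) + 1)
        * (Real.exp (-ν * t) + Real.exp (-ν * (T - t))) := by ring
end
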